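/- arXiv:2406.11298 — 2 statements merged into one kernel-verified Lean document; each statement's English description precedes it below -/
import Mathlib

section
/- Let 1 ≤ p < ∞, 0 < q, r < ∞, let u, v, w be weights on (a,b) with 0 < W(t) < ∞ for all t ∈ (a,b), and let {x_k}_{k=N}^∞ ⊂ [a,b] (N ∈ ℤ) be a discretizing sequence of W (strictly increasing, x_N = a, W(x_k) comparable to 2^{-k}). Then there exists a finite positive constant C such that (∫_a^b (∫_a^x (∫_a^t f(s)ds)^q u(t)dt)^{r/q} w(x)dx)^{1/r} ≤ C (∫_a^b f^p v)^{1/p} holds for all nonnegative measurable f on (a,b) if and only if there exist finite positive constants C′ and C″ such that both of the following hold for all nonnegative measurable f on (a,b): (Σ_{k=N+1}^∞ 2^{-k} (∫_{x_{k-1}}^{x_k} (∫_{x_{k-1}}^t f)^q u(t)dt)^{r/q})^{1/r} ≤ C′ (Σ_{k=N+1}^∞ ∫_{x_{k-1}}^{x_k} f^p v)^{1/p} and (Σ_{k=N+1}^∞ 2^{-k} (∫_a^{x_k} f)^r (∫_{x_k}^{x_{k+1}} u)^{r/q})^{1/r} ≤ C″ (Σ_{k=N+1}^∞ ∫_{x_{k-1}}^{x_k}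 f^p v)^{1/p}. Moreover, the least such constants satisfy C ≈ C′ + C″ with equivalence constants depending only on p, q, r and the discretization constants. -/
open MeasureTheory ENNReal NNReal Set

noncomputable section

/-- The open interval `(a, b)` of real numbers, with extended-real endpoints. -/
def Iab (a b : EReal) : Set ℝ := {x : ℝ | a < (x : EReal) ∧ (x : EReal) < b}

/-- `𝒲(x) = ∫_x^b w(s) ds`. -/
def Wf (w : ℝ → ℝ≥0∞) (b : EReal) (x : EReal) : ℝ≥0∞ := ∫⁻ s in Iab x b, w s

/-- `V_p(x, y)`: for `p > 1` it is `(∫_x^y v^{-1/(p-1)})^{(p-1)/p}`, and for `p = 1` it is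
`ess sup_{s ∈ (x,y)} v(s)⁻¹`. -/
def Vp (v : ℝ → ℝ≥0∞) (p : ℝ) (x y : EReal) : ℝ≥0∞ :=
  if p = 1 then essSup (fun s => (v s)⁻¹) (volume.restrict (Iab x y))
  else (∫⁻ s in Iab x y, v s ^ (-(1 : ℝ) / (p - 1))) ^ ((p - 1) / p)

/-- Left-hand side of the iterated Hardy inequality. -/
def lhsIter (a b : EReal) (u w : ℝ → ℝ≥0∞) (q r : ℝ) (f : ℝ → ℝ≥0∞) : ℝ≥0∞ :=
  (∫⁻ x in Iab a b,
      (∫⁻ t in Iab a (x : EReal),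
          (∫⁻ s in Iab a (t : EReal), f s) ^ q * u t) ^ (r / q) * w x) ^ (1 / r)

/-- Right-hand side `(∫_a^b f^p v)^{1/p}`. -/
def rhsLp (a b : EReal) (v : ℝ → ℝ≥0∞) (p : ℝ) (f : ℝ → ℝ≥0∞) : ℝ≥0∞ :=
  (∫⁻ x in Iab a b, f x ^ p * v x) ^ (1 / p)

/-- The iterated Hardy inequality with constant `C` holds for all nonnegative measurable `f`. -/
def MainIneq (a b : EReal) (u v w : ℝ → ℝ≥0∞) (p q r : ℝ) (C : ℝ≥0∞) : Prop :=
  ∀ f : ℝ → ℝ≥0∞, Measurable f → lhsIter a b u w q r f ≤ C * rhsLp a b v p f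

/-- The discretized right-hand side `(Σ_{k>N} ∫_{x_{k-1}}^{x_k} f^p v)^{1/p}`. -/
def DiscRHS (v : ℝ → ℝ≥0∞) (p : ℝ) (N : ℤ) (x : ℤ → EReal) (f : ℝ → ℝ≥0∞) : ℝ≥0∞ :=
  (∑' k : {k : ℤ // N < k}, ∫⁻ s in Iab (x (k.1 - 1)) (x k.1), f s ^ p * v s) ^ (1 / p)

/-- The first discretized inequality, with constant `C`. -/
def Disc1 (u v : ℝ → ℝ≥0∞) (p q r : ℝ) (N : ℤ) (x : ℤ → EReal) (C : ℝ≥0∞) : Prop :=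
  ∀ f : ℝ → ℝ≥0∞, Measurable f →
    (∑' k : {k : ℤ // N < k}, (2 : ℝ≥0∞) ^ (-(k.1 : ℝ)) *
        (∫⁻ t in Iab (x (k.1 - 1)) (x k.1),
            (∫⁻ s in Iab (x (k.1 - 1)) (t : EReal), f s) ^ q * u t) ^ (r / q)) ^ (1 / r)
      ≤ C * DiscRHS v p N x f

/-- The second discretized inequality, with constant `C`. -/
def Disc2 (a : EReal) (u v : ℝ → ℝ≥0∞) (p q r : ℝ) (N : ℤ) (x : ℤ → EReal) (C : ℝ≥0∞) : Prop :=
  ∀ f : ℝ → ℝ≥0∞, Measurable f →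
    (∑' k : {k : ℤ // N < k}, (2 : ℝ≥0∞) ^ (-(k.1 : ℝ)) *
        (∫⁻ s in Iab a (x k.1), f s) ^ r *
        (∫⁻ s in Iab (x k.1) (x (k.1 + 1)), u s) ^ (r / q)) ^ (1 / r)
      ≤ C * DiscRHS v p N x f

/-- `B(c, d)`: the best constant of the local weighted Hardy inequality on `(c, d)`. -/
def Bconst (u v : ℝ → ℝ≥0∞) (p q : ℝ) (c d : EReal) : ℝ≥0∞ :=
  ⨆ (h : ℝ → ℝ≥0∞) (_ : Measurable h),
    (∫⁻ t in Iab c d, (∫⁻ s in Iab c (t : EReal), h s) ^ q * u t) ^ (1 / q) /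
      (∫⁻ t in Iab c d, h t ^ p * v t) ^ (1 / p)

/-- The discrete inequality featuring the local best constants `B(x_{k-1}, x_k)`. -/
def SeqB (u v : ℝ → ℝ≥0∞) (p q r : ℝ) (N : ℤ) (x : ℤ → EReal) (C : ℝ≥0∞) : Prop :=
  ∀ aa : ℤ → ℝ≥0,
    (∑' k : {k : ℤ // N < k}, (2 : ℝ≥0∞) ^ (-(k.1 : ℝ)) *
        (aa k.1 : ℝ≥0∞) ^ r * Bconst u v p q (x (k.1 - 1)) (x k.1) ^ r) ^ (1 / r)
      ≤ C * (∑' k : {k : ℤ // N < k}, (aa k.1 : ℝ≥0∞) ^ p) ^ (1 / p)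

/-- The discrete inequality featuring the quantities `V_p(x_{j-1}, x_j)`. -/
def SeqV (u v : ℝ → ℝ≥0∞) (p q r : ℝ) (N : ℤ) (x : ℤ → EReal) (C : ℝ≥0∞) : Prop :=
  ∀ aa : ℤ → ℝ≥0,
    (∑' k : {k : ℤ // N < k}, (2 : ℝ≥0∞) ^ (-(k.1 : ℝ)) *
        (∫⁻ s in Iab (x k.1) (x (k.1 + 1)), u s) ^ (r / q) *
        (∑ j ∈ Finset.Icc (N + 1) k.1, (aa j : ℝ≥0∞) * Vp v p (x (j - 1)) (x j)) ^ r) ^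
      (1 / r)
      ≤ C * (∑' k : {k : ℤ // N < k}, (aa k.1 : ℝ≥0∞) ^ p) ^ (1 / p)

namespace S15

lemma tsum_shift (g : ℕ → ℝ≥0∞) (i : ℕ) :
    (∑' n, if i ≤ n then g n else 0) = ∑' m, g (i + m) := by
  rw [← Function.Injective.tsum_eq (f := fun n => if i ≤ n then g n else 0)
      (g := fun m => i + m) (add_right_injective i)]
  · refine tsum_congr fun m => ?_
    rw [if_pos (Nat.le_add_right i m)]
  · intro n hn
    have hin : i ≤ n := by
      by_contra hlt
      exact hn (if_neg hlt)
    exact ⟨n - i, by simp; omega⟩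

/-- The fundamental rearrangement: `∑_n ∑_{j ≤ n} h j n = ∑_j ∑_{m} h j (j+m)`. -/
lemma swap_sum (h : ℕ → ℕ → ℝ≥0∞) :
    ∑' n, ∑ j ∈ Finset.range (n + 1), h j n = ∑' j, ∑' m, h j (j + m) := by
  have e1 : ∀ n : ℕ, (∑ j ∈ Finset.range (n + 1), h j n)
      = ∑' j, if j ≤ n then h j n else 0 := by
    intro n
    rw [tsum_eq_sum (s := Finset.range (n + 1)) (fun b hb => if_neg (by
      simp only [Finset.mem_range] at hb; omega))]
    exact Finset.sum_congr rfl fun j hj => (if_pos (by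
      simp only [Finset.mem_range] at hj; omega)).symm
  calc ∑' n, ∑ j ∈ Finset.range (n + 1), h j n
      = ∑' n, ∑' j, if j ≤ n then h j n else 0 := tsum_congr e1
    _ = ∑' j, ∑' n, if j ≤ n then h j n else 0 := ENNReal.tsum_comm
    _ = ∑' j, ∑' m, h j (j + m) := tsum_congr fun j => tsum_shift (fun n => h j n) j

lemma geom_tail (i : ℕ) : (∑' m : ℕ, ((2:ℝ≥0∞))⁻¹ ^ (i + m)) = 2 * 2⁻¹ ^ i := by
  have : ∀ m : ℕ, (2:ℝ≥0∞)⁻¹ ^ (i + m) = 2⁻¹ ^ i * 2⁻¹ ^ m := fun m => pow_add _ i m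
  rw [tsum_congr this, ENNReal.tsum_mul_left, ENNReal.tsum_geometric]
  have h2 : (1 : ℝ≥0∞) - 2⁻¹ = 2⁻¹ := by
    rw [ENNReal.sub_eq_of_eq_add (by simp)]
    rw [← two_mul, ENNReal.mul_inv_cancel (by norm_num) (by norm_num)]
  rw [h2, mul_comm]
  congr 1
  simp [inv_inv]

/-- Abel-type summation: if `T` is nondecreasing and the tails of `A` dominate `c·2⁻ⁿ`,
then `∑ 2⁻ⁿ T n ≤ 2 c⁻¹ ∑ A n T n`. -/
lemma abel (A T : ℕ → ℝ≥0∞) (hT : Monotone T) (c : ℝ≥0∞) (hc0 : c ≠ 0) (hct : c ≠ ∞)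
    (h : ∀ n, c * 2⁻¹ ^ n ≤ ∑' m, A (n + m)) :
    ∑' n, 2⁻¹ ^ n * T n ≤ 2 * c⁻¹ * ∑' n, A n * T n := by
  set t : ℕ → ℝ≥0∞ := fun i => Nat.rec (T 0) (fun i _ => T (i + 1) - T i) i with ht
  have hTt : ∀ n, T n = ∑ i ∈ Finset.range (n + 1), t i := by
    intro n
    induction n with
    | zero => simp [ht]
    | succ n ih =>
      rw [Finset.sum_range_succ, ← ih]
      have : t (n + 1) = T (n + 1) - T n := rfl
      rw [this, add_tsub_cancel_of_le (hT (Nat.le_succ n))]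
  have lhs_eq : ∑' n, 2⁻¹ ^ n * T n = ∑' i, t i * (2 * 2⁻¹ ^ i) := by
    calc ∑' n, 2⁻¹ ^ n * T n
        = ∑' n, ∑ i ∈ Finset.range (n + 1), 2⁻¹ ^ n * t i := by
          refine tsum_congr fun n => ?_; rw [hTt n, Finset.mul_sum]
      _ = ∑' i, ∑' m, 2⁻¹ ^ (i + m) * t i := swap_sum (fun i n => 2⁻¹ ^ n * t i)
      _ = ∑' i, t i * (2 * 2⁻¹ ^ i) := by
          refine tsum_congr fun i => ?_
          rw [tsum_congr (fun m => mul_comm ((2:ℝ≥0∞)⁻¹ ^ (i + m)) (t i)),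
            ENNReal.tsum_mul_left, geom_tail]
  have rhs_eq : ∑' n, A n * T n = ∑' i, t i * ∑' m, A (i + m) := by
    calc ∑' n, A n * T n
        = ∑' n, ∑ i ∈ Finset.range (n + 1), A n * t i := by
          refine tsum_congr fun n => ?_; rw [hTt n, Finset.mul_sum]
      _ = ∑' i, ∑' m, A (i + m) * t i := swap_sum (fun i n => A n * t i)
      _ = ∑' i, t i * ∑' m, A (i + m) := by
          refine tsum_congr fun i => ?_
          rw [tsum_congr (fun m => mul_comm (A (i + m)) (t i)), ENNReal.tsum_mul_left]
  rw [lhs_eq, rhs_eq, ← ENNReal.tsum_mul_left]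
  refine ENNReal.tsum_le_tsum fun i => ?_
  calc t i * (2 * 2⁻¹ ^ i) = 2 * c⁻¹ * (t i * (c * 2⁻¹ ^ i)) := by
        rw [show 2 * c⁻¹ * (t i * (c * 2⁻¹ ^ i)) = t i * (2 * (c⁻¹ * c * 2⁻¹ ^ i)) by ring,
          ENNReal.inv_mul_cancel hc0 hct, one_mul]
    _ ≤ 2 * c⁻¹ * (t i * ∑' m, A (i + m)) := by
        gcongr
        exact h i

end S15
namespace S15
/-- Discrete Hardy inequality with geometric weights. -/
lemma dHardy (ρ : ℝ) (hρ : 0 < ρ) : ∃ K : ℝ≥0∞, K ≠ 0 ∧ K ≠ ∞ ∧ ∀ c : ℕ → ℝ≥0∞,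
    ∑' n, 2⁻¹ ^ n * (∑ j ∈ Finset.range (n + 1), c j) ^ ρ
      ≤ K * ∑' n, 2⁻¹ ^ n * c n ^ ρ := by
  rcases le_or_gt ρ 1 with hρ1 | hρ1
  · -- subadditive case
    refine ⟨2, by norm_num, by norm_num, fun c => ?_⟩
    have sub : ∀ n, (∑ j ∈ Finset.range (n + 1), c j) ^ ρ
        ≤ ∑ j ∈ Finset.range (n + 1), c j ^ ρ := by
      intro n
      induction n with
      | zero => simp
      | succ n ih =>
        have h1 : (∑ j ∈ Finset.range (n + 2), c j) ^ ρ
            ≤ (∑ j ∈ Finset.range (n + 1), c j) ^ ρ + c (n + 1) ^ ρ := by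
          rw [Finset.sum_range_succ]
          exact ENNReal.rpow_add_le_add_rpow _ _ hρ.le hρ1
        refine h1.trans ?_
        rw [Finset.sum_range_succ (f := fun j => c j ^ ρ)]
        gcongr
    calc ∑' n, 2⁻¹ ^ n * (∑ j ∈ Finset.range (n + 1), c j) ^ ρ
        ≤ ∑' n, 2⁻¹ ^ n * ∑ j ∈ Finset.range (n + 1), c j ^ ρ := by
          refine ENNReal.tsum_le_tsum fun n => ?_; gcongr; exact sub n
      _ = ∑' n, ∑ j ∈ Finset.range (n + 1), 2⁻¹ ^ n * c j ^ ρ := by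
          refine tsum_congr fun n => ?_; rw [Finset.mul_sum]
      _ = ∑' j, ∑' m, 2⁻¹ ^ (j + m) * c j ^ ρ := swap_sum _
      _ = ∑' j, c j ^ ρ * (2 * 2⁻¹ ^ j) := by
          refine tsum_congr fun j => ?_
          rw [tsum_congr (fun m => mul_comm ((2:ℝ≥0∞)⁻¹ ^ (j + m)) (c j ^ ρ)),
            ENNReal.tsum_mul_left, geom_tail]
      _ = 2 * ∑' j, 2⁻¹ ^ j * c j ^ ρ := by
          rw [← ENNReal.tsum_mul_left]
          exact tsum_congr fun j => by ring
  · -- convexity case: ρ > 1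
    set e : ℝ := (2 * (ρ - 1))⁻¹ with he
    have hρ10 : ρ - 1 ≠ 0 := by linarith
    have heρ : e * (ρ - 1) = 1 / 2 := by
      rw [he]
      field_simp
    set γ : ℝ≥0∞ := 2 ^ (-e) with hγ
    have h2top : (2:ℝ≥0∞) ≠ ∞ := by norm_num
    have h20 : (2:ℝ≥0∞) ≠ 0 := by norm_num
    have hγ0 : γ ≠ 0 := by
      rw [hγ]; exact (ENNReal.rpow_pos (by norm_num) h2top).ne'
    have hepos : (0:ℝ) < e := by
      rw [he]
      have h1 : (0:ℝ) < ρ - 1 := by linarith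
      positivity
    have hγ1 : γ < 1 := by
      rw [hγ]
      calc (2:ℝ≥0∞) ^ (-e) < 2 ^ (0:ℝ) :=
            ENNReal.rpow_lt_rpow_of_exponent_lt (by norm_num) h2top (by linarith)
        _ = 1 := by simp
    have hγtop : γ ≠ ∞ := (hγ1.trans ENNReal.one_lt_top).ne
    set Z₀ : ℝ≥0∞ := (1 - γ)⁻¹ with hZ₀
    have hZ₀top : Z₀ ≠ ∞ := by
      rw [hZ₀]
      simp only [ne_eq, ENNReal.inv_eq_top, tsub_eq_zero_iff_le]
      exact not_le.mpr hγ1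
    have hZ₀0 : Z₀ ≠ 0 := by
      rw [hZ₀]
      simp only [ne_eq, ENNReal.inv_eq_zero]
      exact (tsub_le_self.trans_lt ENNReal.one_lt_top).ne
    set σ : ℝ≥0∞ := 2 ^ ((1:ℝ)/2) with hσ
    have hσtop : σ ≠ ∞ := ENNReal.rpow_ne_top_of_nonneg (by norm_num) h2top
    have hkey : ∀ m : ℕ, ((γ ^ m : ℝ≥0∞)) ^ (1 - ρ) = σ ^ m := by
      intro m
      rw [hγ, hσ, ← ENNReal.rpow_natCast (2 ^ (-e)) m, ← ENNReal.rpow_mul,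
        ← ENNReal.rpow_mul, ← ENNReal.rpow_natCast (2 ^ ((1:ℝ)/2)) m,
        ← ENNReal.rpow_mul]
      congr 1
      have : -e * (1 - ρ) = 1 / 2 := by rw [← heρ]; ring
      nlinarith [this]
    have hhalf : (2:ℝ≥0∞)⁻¹ * σ < 1 := by
      have : (2:ℝ≥0∞)⁻¹ * σ = 2 ^ (-(1:ℝ)/2) := by
        rw [hσ, ← ENNReal.rpow_neg_one 2, ← ENNReal.rpow_add _ _ h20 h2top]
        norm_num
      rw [this]
      calc (2:ℝ≥0∞) ^ (-(1:ℝ)/2) < 2 ^ (0:ℝ) :=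
            ENNReal.rpow_lt_rpow_of_exponent_lt (by norm_num) h2top (by norm_num)
        _ = 1 := by simp
    set K₂ : ℝ≥0∞ := (1 - 2⁻¹ * σ)⁻¹ with hK₂
    have hK₂top : K₂ ≠ ∞ := by
      rw [hK₂]
      simp only [ne_eq, ENNReal.inv_eq_top, tsub_eq_zero_iff_le]
      exact not_le.mpr hhalf
    have hK₂0 : K₂ ≠ 0 := by
      rw [hK₂]
      simp only [ne_eq, ENNReal.inv_eq_zero]
      exact (tsub_le_self.trans_lt ENNReal.one_lt_top).ne
    refine ⟨Z₀ ^ (ρ - 1) * K₂, ?_, ?_, ?_⟩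
    · exact mul_ne_zero (ENNReal.rpow_pos (pos_iff_ne_zero.mpr hZ₀0) hZ₀top).ne' hK₂0
    · exact ENNReal.mul_ne_top (ENNReal.rpow_ne_top_of_nonneg (by linarith) hZ₀top) hK₂top
    intro c
    -- pointwise Jensen bound
    have jensen : ∀ n : ℕ, (∑ j ∈ Finset.range (n + 1), c j) ^ ρ
        ≤ ∑ j ∈ Finset.range (n + 1), σ ^ (n - j) * Z₀ ^ (ρ - 1) * c j ^ ρ := by
      intro n
      set Z : ℝ≥0∞ := ∑ j ∈ Finset.range (n + 1), γ ^ (n - j) with hZ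
      have hZrefl : Z = ∑ m ∈ Finset.range (n + 1), γ ^ m := by
        rw [hZ, ← Finset.sum_range_reflect]
        refine Finset.sum_congr rfl fun j hj => ?_
        simp only [Finset.mem_range] at hj
        congr 1
        omega
      have hZ1 : (1:ℝ≥0∞) ≤ Z := by
        rw [hZrefl]
        calc (1:ℝ≥0∞) = γ ^ 0 := by simp
          _ ≤ _ := Finset.single_le_sum (fun i _ => zero_le) (by simp)
      have hZle : Z ≤ Z₀ := by
        rw [hZrefl, hZ₀]
        calc ∑ m ∈ Finset.range (n + 1), γ ^ m ≤ ∑' m : ℕ, γ ^ m :=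
              ENNReal.sum_le_tsum _
          _ = (1 - γ)⁻¹ := ENNReal.tsum_geometric γ
      have hZ0 : Z ≠ 0 := fun h => by simp [h] at hZ1
      have hZtop : Z ≠ ∞ := (hZle.trans_lt (lt_top_iff_ne_top.mpr hZ₀top)).ne
      set lam : ℕ → ℝ≥0∞ := fun j => γ ^ (n - j) * Z⁻¹ with hlam
      have hlam0 : ∀ j, lam j ≠ 0 := fun j =>
        mul_ne_zero (pow_ne_zero _ hγ0) (ENNReal.inv_ne_zero.mpr hZtop)
      have hlamtop : ∀ j, lam j ≠ ∞ := fun j =>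
        ENNReal.mul_ne_top (ENNReal.pow_ne_top hγtop) (ENNReal.inv_ne_top.mpr hZ0)
      have hsum1 : ∑ j ∈ Finset.range (n + 1), lam j = 1 := by
        rw [hlam, ← Finset.sum_mul, ← hZ, ENNReal.mul_inv_cancel hZ0 hZtop]
      have step1 : (∑ j ∈ Finset.range (n + 1), c j) ^ ρ
          ≤ ∑ j ∈ Finset.range (n + 1), lam j * ((lam j)⁻¹ * c j) ^ ρ := by
        have hc : ∀ j ∈ Finset.range (n+1), c j = lam j * ((lam j)⁻¹ * c j) := by
          intro j _
          rw [← mul_assoc, ENNReal.mul_inv_cancel (hlam0 j) (hlamtop j), one_mul]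
        calc (∑ j ∈ Finset.range (n + 1), c j) ^ ρ
            = (∑ j ∈ Finset.range (n + 1), lam j * ((lam j)⁻¹ * c j)) ^ ρ := by
              rw [Finset.sum_congr rfl hc]
          _ ≤ _ := ENNReal.rpow_arith_mean_le_arith_mean_rpow _ _ _ hsum1 hρ1.le
      refine step1.trans (Finset.sum_le_sum fun j hj => ?_)
      by_cases hcj : c j = 0
      · simp [hcj, ENNReal.zero_rpow_of_pos hρ, ENNReal.zero_rpow_of_pos hρ]
      have expand : ((lam j)⁻¹ * c j) ^ ρ = ((lam j)⁻¹) ^ ρ * c j ^ ρ :=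
        ENNReal.mul_rpow_of_ne_zero (ENNReal.inv_ne_zero.mpr (hlamtop j)) hcj ρ
      rw [expand, ← mul_assoc]
      gcongr ?_ * _
      have hlc : lam j * ((lam j)⁻¹) ^ ρ = (lam j) ^ (1 - ρ) := by
        calc lam j * ((lam j)⁻¹) ^ ρ = lam j ^ (1:ℝ) * lam j ^ (-ρ) := by
              rw [ENNReal.inv_rpow, ← ENNReal.rpow_neg, ENNReal.rpow_one]
          _ = (lam j) ^ (1 - ρ) := by
              rw [← ENNReal.rpow_add _ _ (hlam0 j) (hlamtop j)]
              norm_num [sub_eq_add_neg]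
      rw [hlc, hlam, ENNReal.mul_rpow_of_ne_top (ENNReal.pow_ne_top hγtop)
        (ENNReal.inv_ne_top.mpr hZ0), hkey]
      gcongr σ ^ (n - j) * ?_
      rw [ENNReal.inv_rpow, ← ENNReal.rpow_neg]
      have : -(1 - ρ) = ρ - 1 := by ring
      rw [this]
      exact ENNReal.rpow_le_rpow hZle (by linarith)
    calc ∑' n, 2⁻¹ ^ n * (∑ j ∈ Finset.range (n + 1), c j) ^ ρ
        ≤ ∑' n, ∑ j ∈ Finset.range (n + 1),
            2⁻¹ ^ n * (σ ^ (n - j) * Z₀ ^ (ρ - 1) * c j ^ ρ) := by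
          refine ENNReal.tsum_le_tsum fun n => ?_
          rw [← Finset.mul_sum]
          gcongr
          exact jensen n
      _ = ∑' j, ∑' m, 2⁻¹ ^ (j + m) * (σ ^ ((j + m) - j) * Z₀ ^ (ρ - 1) * c j ^ ρ) :=
          swap_sum (fun j n => 2⁻¹ ^ n * (σ ^ (n - j) * Z₀ ^ (ρ - 1) * c j ^ ρ))
      _ = ∑' j, ∑' m, (Z₀ ^ (ρ - 1) * (2⁻¹ ^ j * c j ^ ρ)) * (2⁻¹ * σ) ^ m := by
          refine tsum_congr fun j => tsum_congr fun m => ?_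
          rw [Nat.add_sub_cancel_left, pow_add, mul_pow]
          ring
      _ = ∑' j, (Z₀ ^ (ρ - 1) * (2⁻¹ ^ j * c j ^ ρ)) * K₂ := by
          refine tsum_congr fun j => ?_
          rw [ENNReal.tsum_mul_left, ENNReal.tsum_geometric, ← hK₂]
      _ = Z₀ ^ (ρ - 1) * K₂ * ∑' j, 2⁻¹ ^ j * c j ^ ρ := by
          rw [← ENNReal.tsum_mul_left]
          exact tsum_congr fun j => by ring
end S15
namespace S15

lemma measurableSet_Iab (a b : EReal) : MeasurableSet (Iab a b) := by
  have h : (Iab a b).OrdConnected := by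
    constructor
    intro s hs t ht y hy
    exact ⟨lt_of_lt_of_le hs.1 (EReal.coe_le_coe_iff.mpr hy.1),
      lt_of_le_of_lt (EReal.coe_le_coe_iff.mpr hy.2) ht.2⟩
  exact h.measurableSet

lemma Iab_subset_Iab {a a' b b' : EReal} (ha : a' ≤ a) (hb : b ≤ b') :
    Iab a b ⊆ Iab a' b' := fun y hy => ⟨lt_of_le_of_lt ha hy.1, lt_of_lt_of_le hy.2 hb⟩

lemma Iab_self (c : EReal) : Iab c c = ∅ := by
  ext y; simp only [Iab, mem_setOf_eq, mem_empty_iff_false, iff_false, not_and]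
  exact fun h => (lt_asymm h)

lemma two_rpow_ne_top (z : ℝ) : (2:ℝ≥0∞) ^ z ≠ ⊤ := by
  simp [ENNReal.rpow_eq_top_iff]

lemma two_rpow_ne_zero (z : ℝ) : (2:ℝ≥0∞) ^ z ≠ 0 :=
  (ENNReal.rpow_pos (by norm_num) (by norm_num)).ne'

lemma two_rpow_neg_nat (n : ℕ) : (2:ℝ≥0∞) ^ (-(n:ℝ)) = 2⁻¹ ^ n := by
  rw [ENNReal.rpow_neg, ENNReal.rpow_natCast, ← ENNReal.inv_pow]

def Zset (x : ℤ → EReal) : Set ℝ := ⋃ k : ℤ, {y : ℝ | (y : EReal) = x k}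

lemma Zset_null (x : ℤ → EReal) : volume (Zset x) = 0 := by
  refine measure_iUnion_null fun k => ?_
  have h : {y : ℝ | (y : EReal) = x k}.Subsingleton := by
    intro y hy y' hy'
    have : (y : EReal) = (y' : EReal) := by
      rw [Set.mem_setOf_eq] at hy hy'; rw [hy, hy']
    exact_mod_cast this
  exact h.countable.measure_zero _

lemma split_lint (a c : EReal) (f : ℝ → ℝ≥0∞) (t : ℝ) :
    (∫⁻ s in Iab a ↑t, f s) ≤ (∫⁻ s in Iab a c, f s) + ∫⁻ s in Iab c ↑t, f s := by
  have hsub : Iab a ↑t ⊆ (Iab a c ∪ Iab c ↑t) ∪ {y : ℝ | (y : EReal) = c} := by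
    intro y hy
    rcases lt_trichotomy (y : EReal) c with h | h | h
    · exact Or.inl (Or.inl ⟨hy.1, h⟩)
    · exact Or.inr h
    · exact Or.inl (Or.inr ⟨h, hy.2⟩)
  have hnull : (∫⁻ s in {y : ℝ | (y : EReal) = c}, f s) = 0 := by
    refine setLIntegral_measure_zero _ _ ?_
    have h : {y : ℝ | (y : EReal) = c}.Subsingleton := by
      intro y hy y' hy'
      rw [Set.mem_setOf_eq] at hy hy'
      exact_mod_cast hy.trans hy'.symm
    exact h.countable.measure_zero _
  calc (∫⁻ s in Iab a ↑t, f s)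
      ≤ ∫⁻ s in (Iab a c ∪ Iab c ↑t) ∪ {y : ℝ | (y : EReal) = c}, f s :=
        lintegral_mono_set hsub
    _ ≤ (∫⁻ s in Iab a c ∪ Iab c ↑t, f s) + ∫⁻ s in {y : ℝ | (y : EReal) = c}, f s :=
        lintegral_union_le _ _ _
    _ = ∫⁻ s in Iab a c ∪ Iab c ↑t, f s := by rw [hnull, add_zero]
    _ ≤ _ := lintegral_union_le _ _ _

lemma rpow_add_le (X Y : ℝ≥0∞) (s : ℝ) (hs : 0 ≤ s) :
    (X + Y) ^ s ≤ 2 ^ s * (X ^ s + Y ^ s) := by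
  calc (X + Y) ^ s ≤ (2 * max X Y) ^ s := by
        apply ENNReal.rpow_le_rpow _ hs
        rw [two_mul]
        exact add_le_add (le_max_left _ _) (le_max_right _ _)
    _ = 2 ^ s * (max X Y) ^ s := ENNReal.mul_rpow_of_nonneg _ _ hs
    _ ≤ 2 ^ s * (X ^ s + Y ^ s) := by
        gcongr
        rcases max_cases X Y with ⟨h, _⟩ | ⟨h, _⟩ <;> rw [h]
        · exact le_add_right (le_refl _)
        · exact le_add_left (le_refl _)

lemma add_rpow_le (X Y : ℝ≥0∞) (s : ℝ) (hs : 0 ≤ s) :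
    X ^ s + Y ^ s ≤ 2 * (X + Y) ^ s := by
  have h1 : X ^ s ≤ (X + Y) ^ s := ENNReal.rpow_le_rpow (le_add_right (le_refl _)) hs
  have h2 : Y ^ s ≤ (X + Y) ^ s := ENNReal.rpow_le_rpow (le_add_left (le_refl _)) hs
  calc X ^ s + Y ^ s ≤ (X + Y) ^ s + (X + Y) ^ s := add_le_add h1 h2
    _ = 2 * (X + Y) ^ s := (two_mul _).symm

section ctx

variable {a b : EReal} {w : ℝ → ℝ≥0∞} {N : ℤ} {x : ℤ → EReal} {d₂ : ℝ≥0∞}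

lemma xmono (hxm : ∀ k, N ≤ k → x k < x (k + 1)) :
    ∀ i j, N ≤ i → i ≤ j → x i ≤ x j := by
  intro i j hNi hij
  refine Int.le_induction (motive := fun j _ => x i ≤ x j) (le_refl _) ?_ j hij
  intro j h2 ih
  exact ih.trans (hxm j (hNi.trans h2)).le

lemma cover (hxm : ∀ k, N ≤ k → x k < x (k + 1)) (hx0 : x N = a)
    (hab : ∀ k, N ≤ k → a ≤ x k ∧ x k ≤ b)
    (hW : ∀ t : ℝ, t ∈ Iab a b → 0 < Wf w b ↑t)
    (hWx : ∀ k, N ≤ k → Wf w b (x k) ≤ d₂ * 2 ^ (-(k : ℝ)))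
    (hd₂ : d₂ ≠ ∞) :
    ∀ y : ℝ, y ∈ Iab a b → ∃ k, N < k ∧ x (k - 1) ≤ ↑y ∧ (↑y : EReal) < x k ∧
      ∀ j, N ≤ j → (↑y : EReal) < x j → k ≤ j := by
  intro y hy
  have hex : ∃ k, N ≤ k ∧ (↑y : EReal) < x k := by
    by_contra hcon
    push_neg at hcon
    have hle : ∀ k, N ≤ k → Wf w b ↑y ≤ d₂ * 2 ^ (-(k : ℝ)) := by
      intro k hk
      refine le_trans ?_ (hWx k hk)
      exact lintegral_mono_set (Iab_subset_Iab (hcon k hk) (le_refl _))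
    have hWy : 0 < Wf w b ↑y := hW y hy
    obtain ⟨n₁, hn₁⟩ : ∃ n : ℕ, d₂ < 2 ^ (n : ℝ) := by
      obtain ⟨n, hn⟩ := ENNReal.exists_nat_gt hd₂
      refine ⟨n, lt_of_lt_of_le hn ?_⟩
      calc ((n : ℝ≥0∞)) ≤ 2 ^ n := by exact_mod_cast Nat.le_of_lt (Nat.lt_two_pow_self (n := n))
        _ = 2 ^ (n : ℝ) := by rw [← ENNReal.rpow_natCast]
    obtain ⟨n₂, hn₂⟩ := ENNReal.exists_inv_two_pow_lt hWy.ne'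
    set k : ℤ := max N ((n₁ : ℤ) + (n₂ : ℤ)) with hk
    have hkN : N ≤ k := le_max_left _ _
    have hkn : (n₁ : ℤ) + (n₂ : ℤ) ≤ k := le_max_right _ _
    have hstrict : d₂ * 2 ^ (-(k : ℝ)) < Wf w b ↑y := by
      calc d₂ * 2 ^ (-(k : ℝ)) < 2 ^ (n₁ : ℝ) * 2 ^ (-(k : ℝ)) := by
            rw [ENNReal.mul_lt_mul_iff_left (two_rpow_ne_zero _) (two_rpow_ne_top _)]
            exact hn₁
        _ = 2 ^ ((n₁ : ℝ) + (-(k : ℝ))) := (ENNReal.rpow_add _ _ (by norm_num) (by norm_num)).symm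
        _ ≤ 2 ^ (-(n₂ : ℝ)) := by
            apply ENNReal.rpow_le_rpow_of_exponent_le (by norm_num)
            have : ((n₁ : ℝ) + (n₂ : ℝ)) ≤ (k : ℝ) := by exact_mod_cast hkn
            linarith
        _ = 2⁻¹ ^ n₂ := two_rpow_neg_nat n₂
        _ < Wf w b ↑y := hn₂
    exact absurd (hle k hkN) (not_le.mpr hstrict)
  obtain ⟨k₀, ⟨hk₀N, hk₀y⟩, hk₀min⟩ := Int.exists_least_of_bdd
    (P := fun k => N ≤ k ∧ (↑y : EReal) < x k) ⟨N, fun z hz => hz.1⟩ hex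
  have hNk₀ : N < k₀ := by
    rcases lt_or_eq_of_le hk₀N with h | h
    · exact h
    · exfalso
      rw [← h, hx0] at hk₀y
      exact lt_asymm hy.1 hk₀y
  refine ⟨k₀, hNk₀, ?_, hk₀y, fun j hj hyj => hk₀min j ⟨hj, hyj⟩⟩
  by_contra hcon
  push_neg at hcon
  have := hk₀min (k₀ - 1) ⟨by omega, hcon⟩
  omega

end ctx
end S15
namespace S15
section ctx
variable {a b : EReal} {w : ℝ → ℝ≥0∞} {N : ℤ} {x : ℤ → EReal} {d₂ : ℝ≥0∞}
/-- Disjointness of the grid intervals. -/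
lemma Iab_disj (hxm : ∀ k, N ≤ k → x k < x (k + 1)) {j k : ℤ} (hj : N < j) (hk : N < k)
    (hjk : j ≠ k) : Disjoint (Iab (x (j-1)) (x j)) (Iab (x (k-1)) (x k)) := by
  wlog h : j < k generalizing j k
  · exact (this hk hj hjk.symm (by omega)).symm
  rw [Set.disjoint_left]
  intro y hyj hyk
  have h1 : x j ≤ x (k - 1) := xmono hxm j (k-1) (by omega) (by omega)
  exact absurd (hyj.2.trans_le h1) (not_lt.mpr hyk.1.le)

/-- Sum of integrals over an injectively indexed subfamily of grid intervals is at most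
the integral over `(a,b)`. -/
lemma lint_lower_nat (hxm : ∀ k, N ≤ k → x k < x (k + 1)) (hx0 : x N = a)
    (hab : ∀ k, N ≤ k → a ≤ x k ∧ x k ≤ b)
    (σ : ℕ → ℤ) (hσinj : Function.Injective σ) (hσ : ∀ n, N < σ n) (g : ℝ → ℝ≥0∞) :
    ∑' n : ℕ, (∫⁻ s in Iab (x (σ n - 1)) (x (σ n)), g s) ≤ ∫⁻ s in Iab a b, g s := by
  rw [← lintegral_iUnion (fun n => measurableSet_Iab _ _)
    (fun n m hnm => Iab_disj hxm (hσ n) (hσ m) (fun h => hnm (hσinj h)))]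
  apply lintegral_mono_set
  refine Set.iUnion_subset fun n => ?_
  refine Iab_subset_Iab ?_ (hab (σ n) (hσ n).le).2
  rw [← hx0]
  exact xmono hxm N (σ n - 1) (le_refl _) (by have := hσ n; omega)

/-- The integral over `(x c, b)` is at most the sum over the grid intervals above `c`. -/
lemma lint_upper (hxm : ∀ k, N ≤ k → x k < x (k + 1)) (hx0 : x N = a)
    (hab : ∀ k, N ≤ k → a ≤ x k ∧ x k ≤ b)
    (hW : ∀ t : ℝ, t ∈ Iab a b → 0 < Wf w b ↑t)
    (hWx : ∀ k, N ≤ k → Wf w b (x k) ≤ d₂ * 2 ^ (-(k : ℝ)))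
    (hd₂ : d₂ ≠ ∞) (c : ℤ) (hc : N ≤ c) (g : ℝ → ℝ≥0∞) :
    (∫⁻ s in Iab (x c) b, g s)
      ≤ ∑' n : ℕ, ∫⁻ s in Iab (x (c + n)) (x (c + 1 + n)), g s := by
  have hsub : Iab (x c) b ⊆ (⋃ n : ℕ, Iab (x (c + n)) (x (c + 1 + n))) ∪ Zset x := by
    intro y hy
    have hyab : y ∈ Iab a b := Iab_subset_Iab (hab c hc).1 (le_refl _) hy
    obtain ⟨k, hkN, hkl, hkr, hkmin⟩ := cover hxm hx0 hab hW hWx hd₂ y hyab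
    have hck : c < k := by
      by_contra hcon
      push_neg at hcon
      exact absurd hkr (not_lt.mpr ((xmono hxm k c (by omega) hcon).trans hy.1.le))
    rcases lt_or_eq_of_le hkl with h | h
    · refine Or.inl (Set.mem_iUnion.mpr ⟨(k - 1 - c).toNat, ?_, ?_⟩)
      · rwa [show (c + ((k - 1 - c).toNat : ℤ)) = k - 1 by omega]
      · rwa [show (c + 1 + ((k - 1 - c).toNat : ℤ)) = k by omega]
    · exact Or.inr (Set.mem_iUnion.mpr ⟨k - 1, h.symm⟩)
  calc (∫⁻ s in Iab (x c) b, g s)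
      ≤ ∫⁻ s in (⋃ n : ℕ, Iab (x (c + n)) (x (c + 1 + n))) ∪ Zset x, g s :=
        lintegral_mono_set hsub
    _ ≤ (∫⁻ s in ⋃ n : ℕ, Iab (x (c + n)) (x (c + 1 + n)), g s) + ∫⁻ s in Zset x, g s :=
        lintegral_union_le _ _ _
    _ = ∫⁻ s in ⋃ n : ℕ, Iab (x (c + n)) (x (c + 1 + n)), g s := by
        rw [setLIntegral_measure_zero _ _ (Zset_null x), add_zero]
    _ ≤ _ := lintegral_iUnion_le _ _

/-- The integral over `(a, x c)` is at most the finite sum over the grid intervals below `c`. -/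
lemma lint_finset_upper (hxm : ∀ k, N ≤ k → x k < x (k + 1)) (hx0 : x N = a)
    (hab : ∀ k, N ≤ k → a ≤ x k ∧ x k ≤ b)
    (hW : ∀ t : ℝ, t ∈ Iab a b → 0 < Wf w b ↑t)
    (hWx : ∀ k, N ≤ k → Wf w b (x k) ≤ d₂ * 2 ^ (-(k : ℝ)))
    (hd₂ : d₂ ≠ ∞) (c : ℤ) (hc : N ≤ c) (g : ℝ → ℝ≥0∞) :
    (∫⁻ s in Iab a (x c), g s)
      ≤ ∑ j ∈ Finset.Icc (N + 1) c, ∫⁻ s in Iab (x (j - 1)) (x j), g s := by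
  have hsub : Iab a (x c) ⊆
      (⋃ j : {j : ℤ // j ∈ Finset.Icc (N + 1) c}, Iab (x (j.1 - 1)) (x j.1)) ∪ Zset x := by
    intro y hy
    have hyab : y ∈ Iab a b := Iab_subset_Iab (le_refl _) (hab c hc).2 hy
    obtain ⟨k, hkN, hkl, hkr, hkmin⟩ := cover hxm hx0 hab hW hWx hd₂ y hyab
    have hkc : k ≤ c := hkmin c hc hy.2
    rcases lt_or_eq_of_le hkl with h | h
    · exact Or.inl (Set.mem_iUnion.mpr ⟨⟨k, by simp [Finset.mem_Icc]; omega⟩, h, hkr⟩)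
    · exact Or.inr (Set.mem_iUnion.mpr ⟨k - 1, h.symm⟩)
  calc (∫⁻ s in Iab a (x c), g s)
      ≤ (∫⁻ s in ⋃ j : {j : ℤ // j ∈ Finset.Icc (N + 1) c},
          Iab (x (j.1 - 1)) (x j.1), g s) + ∫⁻ s in Zset x, g s :=
        (lintegral_mono_set hsub).trans (lintegral_union_le _ _ _)
    _ = ∫⁻ s in ⋃ j : {j : ℤ // j ∈ Finset.Icc (N + 1) c},
          Iab (x (j.1 - 1)) (x j.1), g s := by
        rw [setLIntegral_measure_zero _ _ (Zset_null x), add_zero]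
    _ ≤ ∑' j : {j : ℤ // j ∈ Finset.Icc (N + 1) c},
          ∫⁻ s in Iab (x (j.1 - 1)) (x j.1), g s := lintegral_iUnion_le _ _
    _ = ∑ j ∈ Finset.Icc (N + 1) c, ∫⁻ s in Iab (x (j - 1)) (x j), g s := by
        rw [tsum_fintype]
        exact Finset.sum_attach _ (fun j => ∫⁻ s in Iab (x (j - 1)) (x j), g s)

/-- The finite sum over grid intervals below `c` is at most the integral over `(a, d)`
for any `d ≥ x c`. -/
lemma finset_lower (hxm : ∀ k, N ≤ k → x k < x (k + 1)) (hx0 : x N = a)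
    (c : ℤ) (hc : N ≤ c) (d : EReal) (hd : x c ≤ d) (g : ℝ → ℝ≥0∞) :
    (∑ j ∈ Finset.Icc (N + 1) c, ∫⁻ s in Iab (x (j - 1)) (x j), g s)
      ≤ ∫⁻ s in Iab a d, g s := by
  have hdisj : Pairwise (Function.onFun Disjoint fun j : {j : ℤ // j ∈ Finset.Icc (N + 1) c} =>
      Iab (x (j.1 - 1)) (x j.1)) := by
    intro i j hij
    have hij' : i.1 ≠ j.1 := fun h => hij (Subtype.ext h)
    have hi := i.2; have hj := j.2
    simp only [Finset.mem_Icc] at hi hj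
    exact Iab_disj hxm (by omega) (by omega) hij'
  have e1 : (∑ j ∈ Finset.Icc (N + 1) c, ∫⁻ s in Iab (x (j - 1)) (x j), g s)
      = ∑' j : {j : ℤ // j ∈ Finset.Icc (N + 1) c},
          ∫⁻ s in Iab (x (j.1 - 1)) (x j.1), g s := by
    rw [tsum_fintype]
    exact (Finset.sum_attach _ _).symm
  have e2 : (∑' j : {j : ℤ // j ∈ Finset.Icc (N + 1) c},
        ∫⁻ s in Iab (x (j.1 - 1)) (x j.1), g s)
      = ∫⁻ s in ⋃ j : {j : ℤ // j ∈ Finset.Icc (N + 1) c},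
          Iab (x (j.1 - 1)) (x j.1), g s :=
    (lintegral_iUnion (fun j => measurableSet_Iab _ _) hdisj g).symm
  rw [e1, e2]
  apply lintegral_mono_set
  refine Set.iUnion_subset fun j => ?_
  have hj := j.2
  simp only [Finset.mem_Icc] at hj
  refine Iab_subset_Iab ?_ ((xmono hxm j.1 c (by omega) hj.2).trans hd)
  rw [← hx0]
  exact xmono hxm N (j.1 - 1) (le_refl _) (by omega)

end ctx
end S15
namespace S15
section easyctx
variable {p q r : ℝ} {a b : EReal} {u v w : ℝ → ℝ≥0∞} {N : ℤ} {x : ℤ → EReal}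
  {d₁ d₂ : ℝ≥0∞}

def eqv (N : ℤ) : ℕ ≃ {k : ℤ // N < k} where
  toFun n := ⟨N + 1 + n, by omega⟩
  invFun k := (k.1 - (N + 1)).toNat
  left_inv n := by simp
  right_inv k := by
    apply Subtype.ext
    have := k.2
    simp only []
    omega

lemma wfact (M : ℤ) (n : ℕ) :
    (2:ℝ≥0∞) ^ (-((M + 1 + (n:ℤ) : ℤ) : ℝ)) = 2 ^ (-((M + 1 : ℤ) : ℝ)) * 2⁻¹ ^ n := by
  rw [← two_rpow_neg_nat n, ← ENNReal.rpow_add _ _ (by norm_num) (by norm_num)]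
  congr 1
  push_cast
  ring

lemma rhs_le_disc (hp : 0 < p)
    (hxm : ∀ k, N ≤ k → x k < x (k + 1)) (hx0 : x N = a)
    (hab : ∀ k, N ≤ k → a ≤ x k ∧ x k ≤ b)
    (hW : ∀ t : ℝ, t ∈ Iab a b → 0 < Wf w b ↑t)
    (hWx : ∀ k, N ≤ k → Wf w b (x k) ≤ d₂ * 2 ^ (-(k : ℝ)))
    (hd₂ : d₂ ≠ ∞) (f : ℝ → ℝ≥0∞) :
    rhsLp a b v p f ≤ DiscRHS v p N x f := by
  apply ENNReal.rpow_le_rpow _ (by positivity)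
  calc (∫⁻ s in Iab a b, f s ^ p * v s)
      = ∫⁻ s in Iab (x N) b, f s ^ p * v s := by rw [hx0]
    _ ≤ ∑' n : ℕ, ∫⁻ s in Iab (x (N + n)) (x (N + 1 + n)), f s ^ p * v s :=
        lint_upper hxm hx0 hab hW hWx hd₂ N (le_refl _) _
    _ = ∑' n : ℕ, ∫⁻ s in Iab (x ((N + 1 + (n:ℤ)) - 1)) (x (N + 1 + (n:ℤ))),
          f s ^ p * v s := by
        refine tsum_congr fun n => ?_
        rw [show (N + 1 + (n:ℤ)) - 1 = N + (n:ℤ) by ring]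
    _ = _ := Equiv.tsum_eq (eqv N) fun k : {k : ℤ // N < k} =>
        ∫⁻ s in Iab (x (k.1 - 1)) (x k.1), f s ^ p * v s

lemma easy1 (hq : 0 < q) (hr : 0 < r) (hp : 0 < p)
    (hw : Measurable w)
    (hd₁ : d₁ ≠ 0) (hd₁t : d₁ ≠ ∞) (hd₂ : d₂ ≠ ∞)
    (hxm : ∀ k, N ≤ k → x k < x (k + 1)) (hx0 : x N = a)
    (hab : ∀ k, N ≤ k → a ≤ x k ∧ x k ≤ b)
    (hW : ∀ t : ℝ, t ∈ Iab a b → 0 < Wf w b ↑t)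
    (hWl : ∀ k, N ≤ k → d₁ * 2 ^ (-(k : ℝ)) ≤ Wf w b (x k))
    (hWx : ∀ k, N ≤ k → Wf w b (x k) ≤ d₂ * 2 ^ (-(k : ℝ)))
    (C : ℝ≥0∞) (hmain : MainIneq a b u v w p q r C) :
    Disc1 u v p q r N x ((2 * d₁⁻¹) ^ (1/r) * C) := by
  intro f hf
  have hρ : 0 ≤ r / q := by positivity
  set G : ℝ → ℝ≥0∞ := fun t => (∫⁻ s in Iab a ↑t, f s) ^ q * u t with hG
  set Ybig : ℝ≥0∞ := ∫⁻ s in Iab a b, (∫⁻ t in Iab a ↑s, G t) ^ (r/q) * w s with hYbig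
  set β : ℝ≥0∞ := 2 ^ (-((N + 1 : ℤ) : ℝ)) with hβ
  have hβ0 : β ≠ 0 := two_rpow_ne_zero _
  have hβt : β ≠ ∞ := two_rpow_ne_top _
  set Ssum : ℕ → ℝ≥0∞ := fun n =>
    ∑ j ∈ Finset.Icc (N + 1) (N + 1 + (n:ℤ)), ∫⁻ t in Iab (x (j - 1)) (x j), G t with hS
  set A : ℕ → ℝ≥0∞ := fun n =>
    ∫⁻ s in Iab (x (N + 2 + (n:ℤ) - 1)) (x (N + 2 + (n:ℤ))), w s with hA
  -- Step 1 : reindex the discrete sum over ℕ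
  have step1 : (∑' k : {k : ℤ // N < k}, (2 : ℝ≥0∞) ^ (-(k.1 : ℝ)) *
        (∫⁻ t in Iab (x (k.1 - 1)) (x k.1),
            (∫⁻ s in Iab (x (k.1 - 1)) (t : EReal), f s) ^ q * u t) ^ (r / q))
      = β * ∑' n : ℕ, 2⁻¹ ^ n *
        (∫⁻ t in Iab (x (N + 1 + (n:ℤ) - 1)) (x (N + 1 + (n:ℤ))),
            (∫⁻ s in Iab (x (N + 1 + (n:ℤ) - 1)) (t : EReal), f s) ^ q * u t) ^ (r / q) := by
    rw [← Equiv.tsum_eq (eqv N) (fun k : {k : ℤ // N < k} => (2 : ℝ≥0∞) ^ (-(k.1 : ℝ)) *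
        (∫⁻ t in Iab (x (k.1 - 1)) (x k.1),
            (∫⁻ s in Iab (x (k.1 - 1)) (t : EReal), f s) ^ q * u t) ^ (r / q)),
      ← ENNReal.tsum_mul_left]
    refine tsum_congr fun n => ?_
    simp only [eqv, Equiv.coe_fn_mk]
    rw [wfact N n, hβ]
    ring
  -- Step 2 : termwise domination by the partial sums
  have step2 : ∀ n : ℕ,
      (∫⁻ t in Iab (x (N + 1 + (n:ℤ) - 1)) (x (N + 1 + (n:ℤ))),
          (∫⁻ s in Iab (x (N + 1 + (n:ℤ) - 1)) (t : EReal), f s) ^ q * u t) ^ (r / q)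
        ≤ Ssum n ^ (r/q) := by
    intro n
    apply ENNReal.rpow_le_rpow _ hρ
    have hax : a ≤ x (N + 1 + (n:ℤ) - 1) := by
      rw [← hx0]
      exact xmono hxm N _ (le_refl _) (by omega)
    calc (∫⁻ t in Iab (x (N + 1 + (n:ℤ) - 1)) (x (N + 1 + (n:ℤ))),
          (∫⁻ s in Iab (x (N + 1 + (n:ℤ) - 1)) (t : EReal), f s) ^ q * u t)
        ≤ ∫⁻ t in Iab (x (N + 1 + (n:ℤ) - 1)) (x (N + 1 + (n:ℤ))), G t := by
          refine setLIntegral_mono' (measurableSet_Iab _ _) fun t _ => ?_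
          rw [hG]
          refine mul_le_mul_left (ENNReal.rpow_le_rpow ?_ hq.le) (u t)
          exact lintegral_mono_set (Iab_subset_Iab hax (le_refl _))
      _ ≤ Ssum n := by
          rw [hS]
          exact Finset.single_le_sum
            (f := fun j => ∫⁻ t in Iab (x (j - 1)) (x j), G t)
            (fun i _ => zero_le) (Finset.mem_Icc.mpr ⟨by omega, by omega⟩)
  -- Monotonicity of partial sums
  have hSmono : Monotone fun n => Ssum n ^ (r/q) := by
    intro m n hmn
    apply ENNReal.rpow_le_rpow _ hρ
    simp only [hS]
    exact Finset.sum_le_sum_of_subset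
      (Finset.Icc_subset_Icc (le_refl _) (by omega))
  -- tail bounds for the Abel lemma
  have htails : ∀ n : ℕ, (d₁ * β) * 2⁻¹ ^ n ≤ ∑' m, A (n + m) := by
    intro n
    have h1 : (d₁ * β) * 2⁻¹ ^ n = d₁ * 2 ^ (-((N + 1 + (n:ℤ) : ℤ) : ℝ)) := by
      rw [wfact N n, hβ, mul_assoc]
    rw [h1]
    calc d₁ * 2 ^ (-((N + 1 + (n:ℤ) : ℤ) : ℝ)) ≤ Wf w b (x (N + 1 + (n:ℤ))) :=
          hWl _ (by omega)
      _ ≤ ∑' m : ℕ, ∫⁻ s in Iab (x (N + 1 + (n:ℤ) + (m:ℤ))) (x (N + 1 + (n:ℤ) + 1 + (m:ℤ))),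
            w s := lint_upper hxm hx0 hab hW hWx hd₂ _ (by omega) w
      _ = ∑' m, A (n + m) := by
          refine tsum_congr fun m => ?_
          simp only [hA]
          rw [show (N + 2 + ((n + m : ℕ):ℤ) - 1) = (N + 1 + (n:ℤ) + (m:ℤ)) by push_cast; ring,
            show (N + 2 + ((n + m : ℕ):ℤ)) = (N + 1 + (n:ℤ) + 1 + (m:ℤ)) by push_cast; ring]
  have abel_step := abel A (fun n => Ssum n ^ (r/q)) hSmono (d₁ * β)
    (mul_ne_zero hd₁ hβ0) (ENNReal.mul_ne_top hd₁t hβt) htails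
  -- Step 3 : the Abel-side sum is dominated by the continuous integral
  have step3 : ∑' n, A n * Ssum n ^ (r/q) ≤ Ybig := by
    calc ∑' n, A n * Ssum n ^ (r/q)
        ≤ ∑' n : ℕ, ∫⁻ s in Iab (x (N + 2 + (n:ℤ) - 1)) (x (N + 2 + (n:ℤ))),
            (∫⁻ t in Iab a ↑s, G t) ^ (r/q) * w s := by
          refine ENNReal.tsum_le_tsum fun n => ?_
          have hconst : A n * Ssum n ^ (r/q)
              = ∫⁻ s in Iab (x (N + 2 + (n:ℤ) - 1)) (x (N + 2 + (n:ℤ))),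
                  Ssum n ^ (r/q) * w s := by
            rw [lintegral_const_mul _ hw]
            simp only [hA]
            ring
          rw [hconst]
          refine setLIntegral_mono' (measurableSet_Iab _ _) fun s hs => ?_
          refine mul_le_mul_left (ENNReal.rpow_le_rpow ?_ hρ) (w s)
          rw [hS]
          refine finset_lower hxm hx0 (N + 1 + (n:ℤ)) (by omega) ↑s ?_ G
          have h2 := hs.1
          rw [show (N + 2 + (n:ℤ) - 1) = N + 1 + (n:ℤ) by ring] at h2
          exact h2.le
      _ ≤ Ybig := by
          rw [hYbig]
          exact lint_lower_nat hxm hx0 hab (fun n : ℕ => N + 2 + (n:ℤ))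
            (fun n m h => by dsimp only at h; omega) (fun n => by omega) _
  -- Combine everything
  have hfinal : (∑' k : {k : ℤ // N < k}, (2 : ℝ≥0∞) ^ (-(k.1 : ℝ)) *
        (∫⁻ t in Iab (x (k.1 - 1)) (x k.1),
            (∫⁻ s in Iab (x (k.1 - 1)) (t : EReal), f s) ^ q * u t) ^ (r / q))
      ≤ (2 * d₁⁻¹) * Ybig := by
    rw [step1]
    calc β * ∑' n : ℕ, 2⁻¹ ^ n *
          (∫⁻ t in Iab (x (N + 1 + (n:ℤ) - 1)) (x (N + 1 + (n:ℤ))),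
              (∫⁻ s in Iab (x (N + 1 + (n:ℤ) - 1)) (t : EReal), f s) ^ q * u t) ^ (r / q)
        ≤ β * ∑' n : ℕ, 2⁻¹ ^ n * Ssum n ^ (r/q) :=
          mul_le_mul_right (ENNReal.tsum_le_tsum fun n =>
            mul_le_mul_right (step2 n) _) β
      _ ≤ β * (2 * (d₁ * β)⁻¹ * ∑' n, A n * Ssum n ^ (r/q)) :=
          mul_le_mul_right abel_step β
      _ ≤ β * (2 * (d₁ * β)⁻¹ * Ybig) :=
          mul_le_mul_right (mul_le_mul_right step3 _) β
      _ = (2 * d₁⁻¹) * Ybig := by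
          rw [ENNReal.mul_inv (Or.inl hd₁) (Or.inl hd₁t)]
          rw [show β * (2 * (d₁⁻¹ * β⁻¹) * Ybig) = (β * β⁻¹) * (2 * d₁⁻¹ * Ybig) by ring,
            ENNReal.mul_inv_cancel hβ0 hβt, one_mul]
  have hlhs : lhsIter a b u w q r f = Ybig ^ (1/r) := rfl
  calc (∑' k : {k : ℤ // N < k}, (2 : ℝ≥0∞) ^ (-(k.1 : ℝ)) *
        (∫⁻ t in Iab (x (k.1 - 1)) (x k.1),
            (∫⁻ s in Iab (x (k.1 - 1)) (t : EReal), f s) ^ q * u t) ^ (r / q)) ^ (1/r)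
      ≤ ((2 * d₁⁻¹) * Ybig) ^ (1/r) := ENNReal.rpow_le_rpow hfinal (by positivity)
    _ = (2 * d₁⁻¹) ^ (1/r) * Ybig ^ (1/r) := ENNReal.mul_rpow_of_nonneg _ _ (by positivity)
    _ = (2 * d₁⁻¹) ^ (1/r) * lhsIter a b u w q r f := by rw [hlhs]
    _ ≤ (2 * d₁⁻¹) ^ (1/r) * (C * rhsLp a b v p f) :=
        mul_le_mul_right (hmain f hf) _
    _ ≤ (2 * d₁⁻¹) ^ (1/r) * (C * DiscRHS v p N x f) :=
        mul_le_mul_right (mul_le_mul_right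
          (rhs_le_disc hp hxm hx0 hab hW hWx hd₂ f) C) _
    _ = ((2 * d₁⁻¹) ^ (1/r) * C) * DiscRHS v p N x f := by ring

end easyctx
end S15

namespace S15
section easyctx2
variable {p q r : ℝ} {a b : EReal} {u v w : ℝ → ℝ≥0∞} {N : ℤ} {x : ℤ → EReal}
  {d₁ d₂ : ℝ≥0∞}

lemma easy2 (hq : 0 < q) (hr : 0 < r) (hp : 0 < p)
    (hu : Measurable u) (hw : Measurable w)
    (hd₁ : d₁ ≠ 0) (hd₁t : d₁ ≠ ∞) (hd₂ : d₂ ≠ ∞)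
    (hxm : ∀ k, N ≤ k → x k < x (k + 1)) (hx0 : x N = a)
    (hab : ∀ k, N ≤ k → a ≤ x k ∧ x k ≤ b)
    (hW : ∀ t : ℝ, t ∈ Iab a b → 0 < Wf w b ↑t)
    (hWl : ∀ k, N ≤ k → d₁ * 2 ^ (-(k : ℝ)) ≤ Wf w b (x k))
    (hWx : ∀ k, N ≤ k → Wf w b (x k) ≤ d₂ * 2 ^ (-(k : ℝ)))
    (C : ℝ≥0∞) (hmain : MainIneq a b u v w p q r C) :
    Disc2 a u v p q r N x ((4 * d₁⁻¹) ^ (1/r) * C) := by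
  intro f hf
  have hρ : 0 ≤ r / q := by positivity
  set G : ℝ → ℝ≥0∞ := fun t => (∫⁻ s in Iab a ↑t, f s) ^ q * u t with hG
  set Ybig : ℝ≥0∞ := ∫⁻ s in Iab a b, (∫⁻ t in Iab a ↑s, G t) ^ (r/q) * w s with hYbig
  set β : ℝ≥0∞ := 2 ^ (-((N + 1 : ℤ) : ℝ)) with hβ
  have hβ0 : β ≠ 0 := two_rpow_ne_zero _
  have hβt : β ≠ ∞ := two_rpow_ne_top _
  set G2 : ℕ → ℝ≥0∞ := fun n => (∫⁻ s in Iab a (x (N + 1 + (n:ℤ))), f s) ^ q *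
    ∫⁻ t in Iab (x (N + 1 + (n:ℤ))) (x (N + 1 + (n:ℤ) + 1)), u t with hG2
  set T : ℕ → ℝ≥0∞ := fun n => Finset.sup (Finset.range (n + 1)) G2 with hT
  set A : ℕ → ℝ≥0∞ := fun n =>
    ∫⁻ s in Iab (x (N + 3 + (n:ℤ) - 1)) (x (N + 3 + (n:ℤ))), w s with hA
  have hqρ : q * (r / q) = r := by field_simp
  have g2pow : ∀ X U : ℝ≥0∞, (X ^ q * U) ^ (r/q) = X ^ r * U ^ (r/q) := by
    intro X U
    rw [ENNReal.mul_rpow_of_nonneg _ _ hρ, ← ENNReal.rpow_mul, hqρ]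
  -- Step 1 : reindex
  have step1 : (∑' k : {k : ℤ // N < k}, (2 : ℝ≥0∞) ^ (-(k.1 : ℝ)) *
        (∫⁻ s in Iab a (x k.1), f s) ^ r *
        (∫⁻ s in Iab (x k.1) (x (k.1 + 1)), u s) ^ (r / q))
      = β * ∑' n : ℕ, 2⁻¹ ^ n * G2 n ^ (r/q) := by
    rw [← Equiv.tsum_eq (eqv N) (fun k : {k : ℤ // N < k} => (2 : ℝ≥0∞) ^ (-(k.1 : ℝ)) *
        (∫⁻ s in Iab a (x k.1), f s) ^ r *
        (∫⁻ s in Iab (x k.1) (x (k.1 + 1)), u s) ^ (r / q)),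
      ← ENNReal.tsum_mul_left]
    refine tsum_congr fun n => ?_
    simp only [eqv, Equiv.coe_fn_mk, hG2]
    rw [wfact N n, hβ, g2pow]
    ring
  -- G2 ≤ T, T monotone
  have hG2T : ∀ n, G2 n ^ (r/q) ≤ T n ^ (r/q) := fun n =>
    ENNReal.rpow_le_rpow (Finset.le_sup (Finset.self_mem_range_succ n)) hρ
  have hTmono : Monotone fun n => T n ^ (r/q) := fun m n hmn =>
    ENNReal.rpow_le_rpow (Finset.sup_mono (Finset.range_subset_range.mpr (by omega))) hρ
  -- tails
  have htails : ∀ n : ℕ, (d₁ * (β * 2⁻¹)) * 2⁻¹ ^ n ≤ ∑' m, A (n + m) := by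
    intro n
    have h1 : (d₁ * (β * 2⁻¹)) * 2⁻¹ ^ n = d₁ * 2 ^ (-((N + 2 + (n:ℤ) : ℤ) : ℝ)) := by
      have h2 : (β * 2⁻¹) * 2⁻¹ ^ n = 2 ^ (-((N + 1 + ((n+1:ℕ):ℤ) : ℤ) : ℝ)) := by
        rw [wfact N (n+1), hβ, pow_succ]
        ring
      rw [mul_assoc, h2, show (N + 1 + ((n+1:ℕ):ℤ)) = (N + 2 + (n:ℤ)) by push_cast; ring]
    rw [h1]
    calc d₁ * 2 ^ (-((N + 2 + (n:ℤ) : ℤ) : ℝ)) ≤ Wf w b (x (N + 2 + (n:ℤ))) :=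
          hWl _ (by omega)
      _ ≤ ∑' m : ℕ, ∫⁻ s in Iab (x (N + 2 + (n:ℤ) + (m:ℤ))) (x (N + 2 + (n:ℤ) + 1 + (m:ℤ))),
            w s := lint_upper hxm hx0 hab hW hWx hd₂ _ (by omega) w
      _ = ∑' m, A (n + m) := by
          refine tsum_congr fun m => ?_
          simp only [hA]
          rw [show (N + 3 + ((n + m : ℕ):ℤ) - 1) = (N + 2 + (n:ℤ) + (m:ℤ)) by push_cast; ring,
            show (N + 3 + ((n + m : ℕ):ℤ)) = (N + 2 + (n:ℤ) + 1 + (m:ℤ)) by push_cast; ring]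
  have abel_step := abel A (fun n => T n ^ (r/q)) hTmono (d₁ * (β * 2⁻¹))
    (mul_ne_zero hd₁ (mul_ne_zero hβ0 (by norm_num)))
    (ENNReal.mul_ne_top hd₁t (ENNReal.mul_ne_top hβt (by norm_num))) htails
  -- step 3
  have step3 : ∑' n, A n * T n ^ (r/q) ≤ Ybig := by
    calc ∑' n, A n * T n ^ (r/q)
        ≤ ∑' n : ℕ, ∫⁻ s in Iab (x (N + 3 + (n:ℤ) - 1)) (x (N + 3 + (n:ℤ))),
            (∫⁻ t in Iab a ↑s, G t) ^ (r/q) * w s := by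
          refine ENNReal.tsum_le_tsum fun n => ?_
          have hconst : A n * T n ^ (r/q)
              = ∫⁻ s in Iab (x (N + 3 + (n:ℤ) - 1)) (x (N + 3 + (n:ℤ))),
                  T n ^ (r/q) * w s := by
            rw [lintegral_const_mul _ hw]
            simp only [hA]
            ring
          rw [hconst]
          refine setLIntegral_mono' (measurableSet_Iab _ _) fun s hs => ?_
          refine mul_le_mul_left (ENNReal.rpow_le_rpow ?_ hρ) (w s)
          -- T n ≤ ∫_{(a,s)} G
          rw [hT]
          refine Finset.sup_le fun i hi => ?_
          rw [Finset.mem_range] at hi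
          have hile : (i:ℤ) ≤ (n:ℤ) := by omega
          -- pointwise facts
          have haxi : a ≤ x (N + 1 + (i:ℤ)) := by
            rw [← hx0]; exact xmono hxm N _ (le_refl _) (by omega)
          have hsub2 : Iab (x (N + 1 + (i:ℤ))) (x (N + 1 + (i:ℤ) + 1)) ⊆ Iab a ↑s := by
            refine Iab_subset_Iab haxi ?_
            have h2 := hs.1
            rw [show (N + 3 + (n:ℤ) - 1) = (N + 2 + (n:ℤ)) by ring] at h2
            exact (xmono hxm (N + 1 + (i:ℤ) + 1) (N + 2 + (n:ℤ)) (by omega) (by omega)).trans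
              h2.le
          calc G2 i = ∫⁻ t in Iab (x (N + 1 + (i:ℤ))) (x (N + 1 + (i:ℤ) + 1)),
                (∫⁻ s' in Iab a (x (N + 1 + (i:ℤ))), f s') ^ q * u t := by
                simp only [hG2]
                rw [lintegral_const_mul _ hu]
            _ ≤ ∫⁻ t in Iab (x (N + 1 + (i:ℤ))) (x (N + 1 + (i:ℤ) + 1)), G t := by
                refine setLIntegral_mono' (measurableSet_Iab _ _) fun t ht => ?_
                rw [hG]
                refine mul_le_mul_left (ENNReal.rpow_le_rpow ?_ hq.le) (u t)
                exact lintegral_mono_set (Iab_subset_Iab (le_refl _) ht.1.le)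
            _ ≤ ∫⁻ t in Iab a ↑s, G t := lintegral_mono_set hsub2
      _ ≤ Ybig := by
          rw [hYbig]
          exact lint_lower_nat hxm hx0 hab (fun n : ℕ => N + 3 + (n:ℤ))
            (fun n m h => by dsimp only at h; omega) (fun n => by omega) _
  -- combine
  have hfinal : (∑' k : {k : ℤ // N < k}, (2 : ℝ≥0∞) ^ (-(k.1 : ℝ)) *
        (∫⁻ s in Iab a (x k.1), f s) ^ r *
        (∫⁻ s in Iab (x k.1) (x (k.1 + 1)), u s) ^ (r / q))
      ≤ (4 * d₁⁻¹) * Ybig := by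
    rw [step1]
    calc β * ∑' n : ℕ, 2⁻¹ ^ n * G2 n ^ (r/q)
        ≤ β * ∑' n : ℕ, 2⁻¹ ^ n * T n ^ (r/q) :=
          mul_le_mul_right (ENNReal.tsum_le_tsum fun n =>
            mul_le_mul_right (hG2T n) _) β
      _ ≤ β * (2 * (d₁ * (β * 2⁻¹))⁻¹ * ∑' n, A n * T n ^ (r/q)) :=
          mul_le_mul_right abel_step β
      _ ≤ β * (2 * (d₁ * (β * 2⁻¹))⁻¹ * Ybig) :=
          mul_le_mul_right (mul_le_mul_right step3 _) β
      _ = (4 * d₁⁻¹) * Ybig := by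
          rw [ENNReal.mul_inv (Or.inl hd₁) (Or.inl hd₁t),
            ENNReal.mul_inv (Or.inl hβ0) (Or.inl hβt), inv_inv]
          rw [show β * (2 * (d₁⁻¹ * (β⁻¹ * 2)) * Ybig)
              = (β * β⁻¹) * ((2 * 2) * d₁⁻¹ * Ybig) by ring,
            ENNReal.mul_inv_cancel hβ0 hβt, one_mul,
            show (2:ℝ≥0∞) * 2 = 4 by norm_num]
  have hlhs : lhsIter a b u w q r f = Ybig ^ (1/r) := rfl
  calc (∑' k : {k : ℤ // N < k}, (2 : ℝ≥0∞) ^ (-(k.1 : ℝ)) *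
        (∫⁻ s in Iab a (x k.1), f s) ^ r *
        (∫⁻ s in Iab (x k.1) (x (k.1 + 1)), u s) ^ (r / q)) ^ (1/r)
      ≤ ((4 * d₁⁻¹) * Ybig) ^ (1/r) := ENNReal.rpow_le_rpow hfinal (by positivity)
    _ = (4 * d₁⁻¹) ^ (1/r) * Ybig ^ (1/r) := ENNReal.mul_rpow_of_nonneg _ _ (by positivity)
    _ = (4 * d₁⁻¹) ^ (1/r) * lhsIter a b u w q r f := by rw [hlhs]
    _ ≤ (4 * d₁⁻¹) ^ (1/r) * (C * rhsLp a b v p f) :=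
        mul_le_mul_right (hmain f hf) _
    _ ≤ (4 * d₁⁻¹) ^ (1/r) * (C * DiscRHS v p N x f) :=
        mul_le_mul_right (mul_le_mul_right
          (rhs_le_disc hp hxm hx0 hab hW hWx hd₂ f) C) _
    _ = ((4 * d₁⁻¹) ^ (1/r) * C) * DiscRHS v p N x f := by ring

end easyctx2
end S15

namespace S15
section hardctx
variable {p q r : ℝ} {a b : EReal} {u v w : ℝ → ℝ≥0∞} {N : ℤ} {x : ℤ → EReal}
  {d₁ d₂ : ℝ≥0∞}

lemma sum_Icc_range (N : ℤ) (h : ℤ → ℝ≥0∞) (n : ℕ) :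
    ∑ j ∈ Finset.Icc (N + 1) (N + 1 + (n:ℤ)), h j
      = ∑ i ∈ Finset.range (n + 1), h (N + 1 + (i:ℤ)) := by
  refine Finset.sum_nbij' (fun j => (j - (N + 1)).toNat) (fun i => N + 1 + (i:ℤ))
    ?_ ?_ ?_ ?_ ?_
  · intro j hj
    simp only [Finset.mem_Icc] at hj
    simp only [Finset.mem_range]
    omega
  · intro i hi
    simp only [Finset.mem_range] at hi
    simp only [Finset.mem_Icc]
    omega
  · intro j hj
    simp only [Finset.mem_Icc] at hj
    omega
  · intro i _
    omega
  · intro j hj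
    simp only [Finset.mem_Icc] at hj
    congr 1
    omega

lemma disc_le_rhs (hp : 0 < p)
    (hxm : ∀ k, N ≤ k → x k < x (k + 1)) (hx0 : x N = a)
    (hab : ∀ k, N ≤ k → a ≤ x k ∧ x k ≤ b) (f : ℝ → ℝ≥0∞) :
    DiscRHS v p N x f ≤ rhsLp a b v p f := by
  apply ENNReal.rpow_le_rpow _ (by positivity)
  rw [← Equiv.tsum_eq (eqv N) (fun k : {k : ℤ // N < k} =>
    ∫⁻ s in Iab (x (k.1 - 1)) (x k.1), f s ^ p * v s)]
  exact lint_lower_nat hxm hx0 hab (fun n : ℕ => N + 1 + (n:ℤ))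
    (fun n m h => by dsimp only at h; omega) (fun n => by omega) _

lemma hard (hq : 0 < q) (hr : 0 < r) (hp : 0 < p)
    (hu : Measurable u) (hw : Measurable w)
    (hd₂0 : d₂ ≠ 0) (hd₂ : d₂ ≠ ∞)
    (hxm : ∀ k, N ≤ k → x k < x (k + 1)) (hx0 : x N = a)
    (hab : ∀ k, N ≤ k → a ≤ x k ∧ x k ≤ b)
    (hW : ∀ t : ℝ, t ∈ Iab a b → 0 < Wf w b ↑t)
    (hWx : ∀ k, N ≤ k → Wf w b (x k) ≤ d₂ * 2 ^ (-(k : ℝ)))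
    (K : ℝ≥0∞) (hKprop : ∀ c : ℕ → ℝ≥0∞,
      ∑' n, 2⁻¹ ^ n * (∑ j ∈ Finset.range (n + 1), c j) ^ (r/q)
        ≤ K * ∑' n, 2⁻¹ ^ n * c n ^ (r/q))
    (C' C'' : ℝ≥0∞) (h1 : Disc1 u v p q r N x C') (h2 : Disc2 a u v p q r N x C'') :
    MainIneq a b u v w p q r
      ((4 * d₂ * (2 ^ q) ^ (r/q) * K * 2 ^ (r/q)) ^ (1/r) * (C' + C'')) := by
  intro f hf
  have hρ : 0 ≤ r / q := by positivity
  have hqρ : q * (r / q) = r := by field_simp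
  have g2pow : ∀ X U : ℝ≥0∞, (X ^ q * U) ^ (r/q) = X ^ r * U ^ (r/q) := by
    intro X U
    rw [ENNReal.mul_rpow_of_nonneg _ _ hρ, ← ENNReal.rpow_mul, hqρ]
  set G : ℝ → ℝ≥0∞ := fun t => (∫⁻ s in Iab a ↑t, f s) ^ q * u t with hG
  set Ybig : ℝ≥0∞ := ∫⁻ s in Iab a b, (∫⁻ t in Iab a ↑s, G t) ^ (r/q) * w s with hYbig
  set β : ℝ≥0∞ := 2 ^ (-((N + 1 : ℤ) : ℝ)) with hβ
  have hβ0 : β ≠ 0 := two_rpow_ne_zero _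
  have hβt : β ≠ ∞ := two_rpow_ne_top _
  set L : ℤ → ℝ≥0∞ := fun j =>
    (∫⁻ t in Iab (x (j - 1)) (x j), (∫⁻ s in Iab (x (j - 1)) ↑t, f s) ^ q * u t) with hL
  set Tt : ℤ → ℝ≥0∞ := fun j =>
    (∫⁻ s in Iab a (x (j - 1)), f s) ^ q * ∫⁻ t in Iab (x (j - 1)) (x j), u t with hTt
  set D : ℝ≥0∞ := DiscRHS v p N x f with hD
  -- the two discrete sums
  set S1 : ℝ≥0∞ := ∑' k : {k : ℤ // N < k}, (2 : ℝ≥0∞) ^ (-(k.1 : ℝ)) *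
    (∫⁻ t in Iab (x (k.1 - 1)) (x k.1),
      (∫⁻ s in Iab (x (k.1 - 1)) (t : EReal), f s) ^ q * u t) ^ (r / q) with hS1
  set S2 : ℝ≥0∞ := ∑' k : {k : ℤ // N < k}, (2 : ℝ≥0∞) ^ (-(k.1 : ℝ)) *
    (∫⁻ s in Iab a (x k.1), f s) ^ r *
    (∫⁻ s in Iab (x k.1) (x (k.1 + 1)), u s) ^ (r / q) with hS2
  have hS1bound : S1 ≤ (C' * D) ^ r := by
    have h := h1 f hf
    calc S1 = (S1 ^ (1/r)) ^ r := by
          rw [← ENNReal.rpow_mul, one_div, inv_mul_cancel₀ hr.ne', ENNReal.rpow_one]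
      _ ≤ (C' * D) ^ r := ENNReal.rpow_le_rpow h hr.le
  have hS2bound : S2 ≤ (C'' * D) ^ r := by
    have h := h2 f hf
    calc S2 = (S2 ^ (1/r)) ^ r := by
          rw [← ENNReal.rpow_mul, one_div, inv_mul_cancel₀ hr.ne', ENNReal.rpow_one]
      _ ≤ (C'' * D) ^ r := ENNReal.rpow_le_rpow h hr.le
  -- reindex S1 over ℕ
  have hS1eq : S1 = β * ∑' n : ℕ, 2⁻¹ ^ n * L (N + 1 + (n:ℤ)) ^ (r/q) := by
    rw [hS1, ← Equiv.tsum_eq (eqv N) (fun k : {k : ℤ // N < k} => (2 : ℝ≥0∞) ^ (-(k.1 : ℝ)) *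
        (∫⁻ t in Iab (x (k.1 - 1)) (x k.1),
            (∫⁻ s in Iab (x (k.1 - 1)) (t : EReal), f s) ^ q * u t) ^ (r / q)),
      ← ENNReal.tsum_mul_left]
    refine tsum_congr fun n => ?_
    simp only [eqv, Equiv.coe_fn_mk, hL]
    rw [wfact N n, hβ]
    ring
  -- the T-sum is controlled by S2
  have hTsum : β * ∑' n : ℕ, 2⁻¹ ^ n * Tt (N + 1 + (n:ℤ)) ^ (r/q) ≤ S2 := by
    have hzero : (fun n : ℕ => 2⁻¹ ^ n * Tt (N + 1 + (n:ℤ)) ^ (r/q)) 0 = 0 := by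
      simp only [hTt]
      rw [show (N + 1 + ((0:ℕ):ℤ) - 1) = N by omega, hx0, Iab_self]
      simp [ENNReal.zero_rpow_of_pos hq, ENNReal.zero_rpow_of_pos (by positivity : 0 < r/q)]
    have hshift : (∑' n : ℕ, 2⁻¹ ^ n * Tt (N + 1 + (n:ℤ)) ^ (r/q))
        = ∑' m : ℕ, 2⁻¹ ^ (m + 1) * Tt (N + 1 + ((m+1:ℕ):ℤ)) ^ (r/q) := by
      rw [Function.Injective.tsum_eq (f := fun n : ℕ => 2⁻¹ ^ n * Tt (N + 1 + (n:ℤ)) ^ (r/q))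
        (g := fun m : ℕ => m + 1) (fun m m' h => by dsimp only at h; omega) ?_]
      intro n hn
      have hn0 : n ≠ 0 := fun h0 => hn (by rw [h0]; exact hzero)
      exact ⟨n - 1, by dsimp only; omega⟩
    rw [hshift]
    have heq : ∀ m : ℕ, 2⁻¹ ^ (m + 1) * Tt (N + 1 + ((m+1:ℕ):ℤ)) ^ (r/q)
        = 2⁻¹ * (2⁻¹ ^ m * ((∫⁻ s in Iab a (x (N + 1 + (m:ℤ))), f s) ^ r *
            (∫⁻ s in Iab (x (N + 1 + (m:ℤ))) (x (N + 1 + (m:ℤ) + 1)), u s) ^ (r/q))) := by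
      intro m
      simp only [hTt]
      rw [show (N + 1 + ((m+1:ℕ):ℤ) - 1) = N + 1 + (m:ℤ) by push_cast; ring,
        show (N + 1 + ((m+1:ℕ):ℤ)) = N + 1 + (m:ℤ) + 1 by push_cast; ring,
        g2pow, pow_succ]
      ring
    calc β * ∑' m : ℕ, 2⁻¹ ^ (m + 1) * Tt (N + 1 + ((m+1:ℕ):ℤ)) ^ (r/q)
        = 2⁻¹ * (β * ∑' m : ℕ, 2⁻¹ ^ m * ((∫⁻ s in Iab a (x (N + 1 + (m:ℤ))), f s) ^ r *
            (∫⁻ s in Iab (x (N + 1 + (m:ℤ))) (x (N + 1 + (m:ℤ) + 1)), u s) ^ (r/q))) := by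
          rw [tsum_congr heq, ENNReal.tsum_mul_left]
          ring
      _ ≤ β * ∑' m : ℕ, 2⁻¹ ^ m * ((∫⁻ s in Iab a (x (N + 1 + (m:ℤ))), f s) ^ r *
            (∫⁻ s in Iab (x (N + 1 + (m:ℤ))) (x (N + 1 + (m:ℤ) + 1)), u s) ^ (r/q)) := by
          nth_rewrite 2 [← one_mul (β * _)]
          exact mul_le_mul_left (by norm_num) _
      _ = S2 := by
          rw [hS2, ← Equiv.tsum_eq (eqv N) (fun k : {k : ℤ // N < k} =>
            (2 : ℝ≥0∞) ^ (-(k.1 : ℝ)) * (∫⁻ s in Iab a (x k.1), f s) ^ r *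
            (∫⁻ s in Iab (x k.1) (x (k.1 + 1)), u s) ^ (r / q)), ← ENNReal.tsum_mul_left]
          refine tsum_congr fun n => ?_
          simp only [eqv, Equiv.coe_fn_mk]
          rw [wfact N n, hβ]
          ring
  -- main chain
  have hFhat : ∀ n : ℕ, (∫⁻ t in Iab a (x (N + 1 + (n:ℤ))), G t)
      ≤ 2 ^ q * ∑ i ∈ Finset.range (n + 1),
          (Tt (N + 1 + (i:ℤ)) + L (N + 1 + (i:ℤ))) := by
    intro n
    calc (∫⁻ t in Iab a (x (N + 1 + (n:ℤ))), G t)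
        ≤ ∑ j ∈ Finset.Icc (N + 1) (N + 1 + (n:ℤ)), ∫⁻ t in Iab (x (j - 1)) (x j), G t :=
          lint_finset_upper hxm hx0 hab hW hWx hd₂ _ (by omega) G
      _ = ∑ i ∈ Finset.range (n + 1), ∫⁻ t in Iab (x ((N + 1 + (i:ℤ)) - 1)) (x (N + 1 + (i:ℤ))),
            G t := sum_Icc_range N (fun j => ∫⁻ t in Iab (x (j - 1)) (x j), G t) n
      _ ≤ ∑ i ∈ Finset.range (n + 1), 2 ^ q * (Tt (N + 1 + (i:ℤ)) + L (N + 1 + (i:ℤ))) := ?final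
      _ = 2 ^ q * ∑ i ∈ Finset.range (n + 1), (Tt (N + 1 + (i:ℤ)) + L (N + 1 + (i:ℤ))) :=
          (Finset.mul_sum _ _ _).symm
    case final => 
          refine Finset.sum_le_sum fun i _ => ?_
          set j : ℤ := N + 1 + (i:ℤ) with hj
          calc (∫⁻ t in Iab (x (j - 1)) (x j), G t)
              ≤ ∫⁻ t in Iab (x (j - 1)) (x j),
                  2 ^ q * ((∫⁻ s in Iab a (x (j - 1)), f s) ^ q * u t +
                    (∫⁻ s in Iab (x (j - 1)) ↑t, f s) ^ q * u t) := by
                refine setLIntegral_mono' (measurableSet_Iab _ _) fun t _ => ?_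
                simp only [hG]
                calc (∫⁻ s in Iab a ↑t, f s) ^ q * u t
                    ≤ ((∫⁻ s in Iab a (x (j - 1)), f s) +
                        ∫⁻ s in Iab (x (j - 1)) ↑t, f s) ^ q * u t :=
                      mul_le_mul_left (ENNReal.rpow_le_rpow
                        (split_lint a (x (j - 1)) f t) hq.le) (u t)
                  _ ≤ (2 ^ q * ((∫⁻ s in Iab a (x (j - 1)), f s) ^ q +
                        (∫⁻ s in Iab (x (j - 1)) ↑t, f s) ^ q)) * u t :=
                      mul_le_mul_left (rpow_add_le _ _ q hq.le) (u t)
                  _ = 2 ^ q * ((∫⁻ s in Iab a (x (j - 1)), f s) ^ q * u t +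
                        (∫⁻ s in Iab (x (j - 1)) ↑t, f s) ^ q * u t) := by ring
            _ = 2 ^ q * (Tt j + L j) := by
                rw [lintegral_const_mul' _ _ (two_rpow_ne_top q),
                  lintegral_add_left (hu.const_mul _),
                  lintegral_const_mul _ hu]
  have main1 : Ybig ≤ 2 * d₂ * β * ∑' n : ℕ, 2⁻¹ ^ n *
      (∫⁻ t in Iab a (x (N + 1 + (n:ℤ))), G t) ^ (r/q) := by
    calc Ybig = ∫⁻ s in Iab (x N) b, (∫⁻ t in Iab a ↑s, G t) ^ (r/q) * w s := by
          rw [hYbig, hx0]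
      _ ≤ ∑' n : ℕ, ∫⁻ s in Iab (x (N + (n:ℤ))) (x (N + 1 + (n:ℤ))),
            (∫⁻ t in Iab a ↑s, G t) ^ (r/q) * w s :=
          lint_upper hxm hx0 hab hW hWx hd₂ N (le_refl _) _
      _ ≤ ∑' n : ℕ, (∫⁻ t in Iab a (x (N + 1 + (n:ℤ))), G t) ^ (r/q) *
            ∫⁻ s in Iab (x (N + (n:ℤ))) (x (N + 1 + (n:ℤ))), w s := by
          refine ENNReal.tsum_le_tsum fun n => ?_
          rw [← lintegral_const_mul _ hw]
          refine setLIntegral_mono' (measurableSet_Iab _ _) fun s hs => ?_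
          exact mul_le_mul_left (ENNReal.rpow_le_rpow
            (lintegral_mono_set (Iab_subset_Iab (le_refl _) hs.2.le)) hρ) (w s)
      _ ≤ ∑' n : ℕ, (∫⁻ t in Iab a (x (N + 1 + (n:ℤ))), G t) ^ (r/q) *
            (2 * d₂ * β * 2⁻¹ ^ n) := by
          refine ENNReal.tsum_le_tsum fun n => ?_
          refine mul_le_mul_right ?_ _
          calc (∫⁻ s in Iab (x (N + (n:ℤ))) (x (N + 1 + (n:ℤ))), w s)
              ≤ Wf w b (x (N + (n:ℤ))) :=
                lintegral_mono_set (Iab_subset_Iab (le_refl _) (hab _ (by omega)).2)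
            _ ≤ d₂ * 2 ^ (-((N + (n:ℤ) : ℤ) : ℝ)) := hWx _ (by omega)
            _ = 2 * d₂ * β * 2⁻¹ ^ n := by
                have h3 : (-((N + (n:ℤ) : ℤ) : ℝ)) = 1 + (-((N + 1 + (n:ℤ) : ℤ) : ℝ)) := by
                  push_cast; ring
                rw [h3, ENNReal.rpow_add _ _ (by norm_num) (by norm_num),
                  ENNReal.rpow_one, wfact N n, hβ]
                ring
      _ = 2 * d₂ * β * ∑' n : ℕ, 2⁻¹ ^ n *
            (∫⁻ t in Iab a (x (N + 1 + (n:ℤ))), G t) ^ (r/q) := by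
          rw [← ENNReal.tsum_mul_left]
          exact tsum_congr fun n => by ring
  have main2 : (∑' n : ℕ, 2⁻¹ ^ n *
        (∫⁻ t in Iab a (x (N + 1 + (n:ℤ))), G t) ^ (r/q))
      ≤ (2 ^ q) ^ (r/q) * K * ∑' n : ℕ, 2⁻¹ ^ n *
          (Tt (N + 1 + (n:ℤ)) + L (N + 1 + (n:ℤ))) ^ (r/q) := by
    calc (∑' n : ℕ, 2⁻¹ ^ n * (∫⁻ t in Iab a (x (N + 1 + (n:ℤ))), G t) ^ (r/q))
        ≤ ∑' n : ℕ, 2⁻¹ ^ n * ((2 ^ q) ^ (r/q) *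
            (∑ i ∈ Finset.range (n + 1),
              (Tt (N + 1 + (i:ℤ)) + L (N + 1 + (i:ℤ)))) ^ (r/q)) := by
          refine ENNReal.tsum_le_tsum fun n => mul_le_mul_right ?_ _
          rw [← ENNReal.mul_rpow_of_nonneg _ _ hρ]
          exact ENNReal.rpow_le_rpow (hFhat n) hρ
      _ = (2 ^ q) ^ (r/q) * ∑' n : ℕ, 2⁻¹ ^ n *
            (∑ i ∈ Finset.range (n + 1),
              (Tt (N + 1 + (i:ℤ)) + L (N + 1 + (i:ℤ)))) ^ (r/q) := by
          rw [← ENNReal.tsum_mul_left]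
          exact tsum_congr fun n => by ring
      _ ≤ (2 ^ q) ^ (r/q) * (K * ∑' n : ℕ, 2⁻¹ ^ n *
            (Tt (N + 1 + (n:ℤ)) + L (N + 1 + (n:ℤ))) ^ (r/q)) :=
          mul_le_mul_right (hKprop fun i => Tt (N + 1 + (i:ℤ)) + L (N + 1 + (i:ℤ))) _
      _ = _ := by ring
  have main3 : (∑' n : ℕ, 2⁻¹ ^ n *
        (Tt (N + 1 + (n:ℤ)) + L (N + 1 + (n:ℤ))) ^ (r/q))
      ≤ 2 ^ (r/q) * ((∑' n : ℕ, 2⁻¹ ^ n * Tt (N + 1 + (n:ℤ)) ^ (r/q)) +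
          ∑' n : ℕ, 2⁻¹ ^ n * L (N + 1 + (n:ℤ)) ^ (r/q)) := by
    calc (∑' n : ℕ, 2⁻¹ ^ n * (Tt (N + 1 + (n:ℤ)) + L (N + 1 + (n:ℤ))) ^ (r/q))
        ≤ ∑' n : ℕ, 2⁻¹ ^ n * (2 ^ (r/q) *
            (Tt (N + 1 + (n:ℤ)) ^ (r/q) + L (N + 1 + (n:ℤ)) ^ (r/q))) := by
          refine ENNReal.tsum_le_tsum fun n => mul_le_mul_right (rpow_add_le _ _ _ hρ) _
      _ = 2 ^ (r/q) * ∑' n : ℕ, (2⁻¹ ^ n * Tt (N + 1 + (n:ℤ)) ^ (r/q) +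
            2⁻¹ ^ n * L (N + 1 + (n:ℤ)) ^ (r/q)) := by
          rw [← ENNReal.tsum_mul_left]
          exact tsum_congr fun n => by ring
      _ = _ := by rw [ENNReal.tsum_add]
  -- put it all together
  have total : Ybig ≤ (4 * d₂ * (2 ^ q) ^ (r/q) * K * 2 ^ (r/q)) * ((C' + C'') * D) ^ r := by
    calc Ybig ≤ 2 * d₂ * β * ∑' n : ℕ, 2⁻¹ ^ n *
          (∫⁻ t in Iab a (x (N + 1 + (n:ℤ))), G t) ^ (r/q) := main1
      _ ≤ 2 * d₂ * β * ((2 ^ q) ^ (r/q) * K * ∑' n : ℕ, 2⁻¹ ^ n *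
            (Tt (N + 1 + (n:ℤ)) + L (N + 1 + (n:ℤ))) ^ (r/q)) :=
          mul_le_mul_right main2 _
      _ ≤ 2 * d₂ * β * ((2 ^ q) ^ (r/q) * K * (2 ^ (r/q) *
            ((∑' n : ℕ, 2⁻¹ ^ n * Tt (N + 1 + (n:ℤ)) ^ (r/q)) +
              ∑' n : ℕ, 2⁻¹ ^ n * L (N + 1 + (n:ℤ)) ^ (r/q)))) :=
          mul_le_mul_right (mul_le_mul_right main3 _) _
      _ = 2 * d₂ * (2 ^ q) ^ (r/q) * K * 2 ^ (r/q) *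
            ((β * ∑' n : ℕ, 2⁻¹ ^ n * Tt (N + 1 + (n:ℤ)) ^ (r/q)) +
              β * ∑' n : ℕ, 2⁻¹ ^ n * L (N + 1 + (n:ℤ)) ^ (r/q)) := by ring
      _ ≤ 2 * d₂ * (2 ^ q) ^ (r/q) * K * 2 ^ (r/q) * (S2 + S1) := by
          refine mul_le_mul_right (add_le_add hTsum (le_of_eq hS1eq.symm)) _
      _ ≤ 2 * d₂ * (2 ^ q) ^ (r/q) * K * 2 ^ (r/q) * ((C'' * D) ^ r + (C' * D) ^ r) :=
          mul_le_mul_right (add_le_add hS2bound hS1bound) _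
      _ ≤ 2 * d₂ * (2 ^ q) ^ (r/q) * K * 2 ^ (r/q) * (2 * (C'' * D + C' * D) ^ r) :=
          mul_le_mul_right (add_rpow_le _ _ r hr.le) _
      _ = (4 * d₂ * (2 ^ q) ^ (r/q) * K * 2 ^ (r/q)) * ((C' + C'') * D) ^ r := by
          rw [show C'' * D + C' * D = (C' + C'') * D by ring]
          ring
  -- conclude
  have hlhs : lhsIter a b u w q r f = Ybig ^ (1/r) := rfl
  rw [hlhs]
  calc Ybig ^ (1/r)
      ≤ ((4 * d₂ * (2 ^ q) ^ (r/q) * K * 2 ^ (r/q)) * ((C' + C'') * D) ^ r) ^ (1/r) :=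
        ENNReal.rpow_le_rpow total (by positivity)
    _ = (4 * d₂ * (2 ^ q) ^ (r/q) * K * 2 ^ (r/q)) ^ (1/r) * ((C' + C'') * D) := by
        rw [ENNReal.mul_rpow_of_nonneg _ _ (by positivity : (0:ℝ) ≤ 1/r),
          ← ENNReal.rpow_mul ((C' + C'') * D) r (1/r),
          show r * (1/r) = 1 by field_simp, ENNReal.rpow_one]
    _ ≤ (4 * d₂ * (2 ^ q) ^ (r/q) * K * 2 ^ (r/q)) ^ (1/r) * ((C' + C'') * rhsLp a b v p f) := by
        refine mul_le_mul_right (mul_le_mul_right ?_ _) _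
        rw [hD]
        exact disc_le_rhs hp hxm hx0 hab f
    _ = (4 * d₂ * (2 ^ q) ^ (r/q) * K * 2 ^ (r/q)) ^ (1/r) * (C' + C'') *
          rhsLp a b v p f := by ring

end hardctx
end S15

namespace S15
section memctx
variable {p q r : ℝ} {a b : EReal} {u v w : ℝ → ℝ≥0∞} {N : ℤ} {x : ℤ → EReal}
  {d₁ d₂ : ℝ≥0∞}

lemma f_zero_on (hp : 0 < p) {f : ℝ → ℝ≥0∞} (hf : Measurable f) (hv : Measurable v)
    (I : Set ℝ) (hI : MeasurableSet I) (hvpos : ∀ s ∈ I, v s ≠ 0)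
    (h : (∫⁻ s in I, f s ^ p * v s) = 0) : (∫⁻ s in I, f s) = 0 := by
  have hmeas : Measurable fun s => f s ^ p * v s := (hf.pow_const p).mul hv
  have h1 : ∀ᵐ s ∂(volume.restrict I), f s ^ p * v s = 0 :=
    (lintegral_eq_zero_iff hmeas).mp h
  have h2 : ∀ᵐ s ∂(volume.restrict I), s ∈ I := ae_restrict_mem hI
  have h3 : ∀ᵐ s ∂(volume.restrict I), f s = 0 := by
    filter_upwards [h1, h2] with s hs1 hs2
    rcases mul_eq_zero.mp hs1 with h4 | h4
    · rcases ENNReal.rpow_eq_zero_iff.mp h4 with ⟨h5, _⟩ | ⟨_, h5⟩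
      · exact h5
      · linarith
    · exact absurd h4 (hvpos s hs2)
  calc (∫⁻ s in I, f s) = ∫⁻ s in I, 0 := lintegral_congr_ae h3
    _ = 0 := lintegral_zero

lemma rpow_zero_of_zero {X : ℝ≥0∞} {s : ℝ} (h : X = 0) (hs : 0 < s) : X ^ s = 0 := by
  rw [h]; exact ENNReal.zero_rpow_of_pos hs

lemma disc_zero_terms (hp : 0 < p) {f : ℝ → ℝ≥0∞} (hf : Measurable f) (hv : Measurable v)
    (hxm : ∀ k, N ≤ k → x k < x (k + 1)) (hx0 : x N = a)
    (hab : ∀ k, N ≤ k → a ≤ x k ∧ x k ≤ b)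
    (hvpos : ∀ s ∈ Iab a b, v s ≠ 0)
    (hD : DiscRHS v p N x f = 0) :
    ∀ k : {k : ℤ // N < k}, (∫⁻ s in Iab (x (k.1 - 1)) (x k.1), f s) = 0 := by
  have hsum : (∑' k : {k : ℤ // N < k},
      ∫⁻ s in Iab (x (k.1 - 1)) (x k.1), f s ^ p * v s) = 0 := by
    rcases ENNReal.rpow_eq_zero_iff.mp hD with ⟨h5, _⟩ | ⟨_, h5⟩
    · exact h5
    · exfalso
      have : (0:ℝ) < 1/p := by positivity
      linarith
  have hterm := ENNReal.tsum_eq_zero.mp hsum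
  intro k
  have hsub : Iab (x (k.1 - 1)) (x k.1) ⊆ Iab a b := by
    refine Iab_subset_Iab ?_ (hab k.1 k.2.le).2
    rw [← hx0]
    exact xmono hxm N (k.1 - 1) (le_refl _) (by have := k.2; omega)
  exact f_zero_on hp hf hv _ (measurableSet_Iab _ _)
    (fun s hs => hvpos s (hsub hs)) (hterm k)

lemma mem1top (hp : 0 < p) (hq : 0 < q) (hr : 0 < r) (hv : Measurable v)
    (hxm : ∀ k, N ≤ k → x k < x (k + 1)) (hx0 : x N = a)
    (hab : ∀ k, N ≤ k → a ≤ x k ∧ x k ≤ b)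
    (hvpos : ∀ s ∈ Iab a b, v s ≠ 0) :
    Disc1 u v p q r N x ∞ := by
  intro f hf
  by_cases hD : DiscRHS v p N x f = 0
  · have hfz := disc_zero_terms hp hf hv hxm hx0 hab hvpos hD
    have hzero : ∀ k : {k : ℤ // N < k}, (2 : ℝ≥0∞) ^ (-(k.1 : ℝ)) *
        (∫⁻ t in Iab (x (k.1 - 1)) (x k.1),
          (∫⁻ s in Iab (x (k.1 - 1)) (t : EReal), f s) ^ q * u t) ^ (r / q) = 0 := by
      intro k
      have hin : (∫⁻ t in Iab (x (k.1 - 1)) (x k.1),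
          (∫⁻ s in Iab (x (k.1 - 1)) (t : EReal), f s) ^ q * u t) = 0 := by
        refine le_antisymm ?_ (zero_le)
        have hle : (∫⁻ t in Iab (x (k.1 - 1)) (x k.1),
            (∫⁻ s in Iab (x (k.1 - 1)) (t : EReal), f s) ^ q * u t)
            ≤ ∫⁻ _ in Iab (x (k.1 - 1)) (x k.1), 0 := by
          refine setLIntegral_mono' (measurableSet_Iab _ _) fun t ht => ?_
          have h6 : (∫⁻ s in Iab (x (k.1 - 1)) (t : EReal), f s) = 0 :=
            le_antisymm ((lintegral_mono_set
              (Iab_subset_Iab (le_refl _) ht.2.le)).trans (hfz k).le) (zero_le)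
          rw [h6, ENNReal.zero_rpow_of_pos hq, zero_mul]
        simpa using hle
      rw [hin, ENNReal.zero_rpow_of_pos (by positivity), mul_zero]
    have hts : (∑' k : {k : ℤ // N < k}, (2 : ℝ≥0∞) ^ (-(k.1 : ℝ)) *
        (∫⁻ t in Iab (x (k.1 - 1)) (x k.1),
          (∫⁻ s in Iab (x (k.1 - 1)) (t : EReal), f s) ^ q * u t) ^ (r / q)) = 0 := by
      rw [tsum_congr hzero]
      exact tsum_zero
    rw [hts, ENNReal.zero_rpow_of_pos (by positivity)]
    exact zero_le
  · rw [ENNReal.top_mul hD]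
    exact le_top

lemma mem2top (hp : 0 < p) (hq : 0 < q) (hr : 0 < r) (hv : Measurable v)
    (hxm : ∀ k, N ≤ k → x k < x (k + 1)) (hx0 : x N = a)
    (hab : ∀ k, N ≤ k → a ≤ x k ∧ x k ≤ b)
    (hW : ∀ t : ℝ, t ∈ Iab a b → 0 < Wf w b ↑t)
    (hWx : ∀ k, N ≤ k → Wf w b (x k) ≤ d₂ * 2 ^ (-(k : ℝ)))
    (hd₂ : d₂ ≠ ∞)
    (hvpos : ∀ s ∈ Iab a b, v s ≠ 0) :
    Disc2 a u v p q r N x ∞ := by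
  intro f hf
  by_cases hD : DiscRHS v p N x f = 0
  · have hfz := disc_zero_terms hp hf hv hxm hx0 hab hvpos hD
    have hzero : ∀ k : {k : ℤ // N < k}, (2 : ℝ≥0∞) ^ (-(k.1 : ℝ)) *
        (∫⁻ s in Iab a (x k.1), f s) ^ r *
        (∫⁻ s in Iab (x k.1) (x (k.1 + 1)), u s) ^ (r / q) = 0 := by
      intro k
      have hin : (∫⁻ s in Iab a (x k.1), f s) = 0 := by
        refine le_antisymm ?_ (zero_le)
        calc (∫⁻ s in Iab a (x k.1), f s)
            ≤ ∑ j ∈ Finset.Icc (N + 1) k.1, ∫⁻ s in Iab (x (j - 1)) (x j), f s :=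
              lint_finset_upper hxm hx0 hab hW hWx hd₂ k.1 k.2.le f
          _ = 0 := by
              refine Finset.sum_eq_zero fun j hj => ?_
              simp only [Finset.mem_Icc] at hj
              exact hfz ⟨j, by omega⟩
      rw [hin, ENNReal.zero_rpow_of_pos hr, mul_zero, zero_mul]
    have hts : (∑' k : {k : ℤ // N < k}, (2 : ℝ≥0∞) ^ (-(k.1 : ℝ)) *
        (∫⁻ s in Iab a (x k.1), f s) ^ r *
        (∫⁻ s in Iab (x k.1) (x (k.1 + 1)), u s) ^ (r / q)) = 0 := by
      rw [tsum_congr hzero]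
      exact tsum_zero
    rw [hts, ENNReal.zero_rpow_of_pos (by positivity)]
    exact zero_le
  · rw [ENNReal.top_mul hD]
    exact le_top

lemma memMtop (hp : 0 < p) (hq : 0 < q) (hr : 0 < r) (hv : Measurable v)
    (hvpos : ∀ s ∈ Iab a b, v s ≠ 0) :
    MainIneq a b u v w p q r ∞ := by
  intro f hf
  by_cases hR : rhsLp a b v p f = 0
  · have hint : (∫⁻ s in Iab a b, f s ^ p * v s) = 0 := by
      rcases ENNReal.rpow_eq_zero_iff.mp hR with ⟨h5, _⟩ | ⟨_, h5⟩
      · exact h5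
      · exfalso
        have : (0:ℝ) < 1/p := by positivity
        linarith
    have hfz : (∫⁻ s in Iab a b, f s) = 0 :=
      f_zero_on hp hf hv _ (measurableSet_Iab _ _) hvpos hint
    have hmid : ∀ xx : ℝ, xx ∈ Iab a b →
        (∫⁻ t in Iab a (xx : EReal), (∫⁻ s in Iab a (t : EReal), f s) ^ q * u t) = 0 := by
      intro xx hxx
      refine le_antisymm ?_ (zero_le)
      have hle : (∫⁻ t in Iab a (xx : EReal), (∫⁻ s in Iab a (t : EReal), f s) ^ q * u t)
          ≤ ∫⁻ _ in Iab a (xx : EReal), 0 := by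
        refine setLIntegral_mono' (measurableSet_Iab _ _) fun t ht => ?_
        have htb : (t : EReal) < b := ht.2.trans hxx.2
        have h6 : (∫⁻ s in Iab a (t : EReal), f s) = 0 :=
          le_antisymm ((lintegral_mono_set
            (Iab_subset_Iab (le_refl _) htb.le)).trans hfz.le) (zero_le)
        rw [h6, ENNReal.zero_rpow_of_pos hq, zero_mul]
      simpa using hle
    have houter : (∫⁻ xx in Iab a b,
        (∫⁻ t in Iab a (xx : EReal), (∫⁻ s in Iab a (t : EReal), f s) ^ q * u t) ^ (r/q) *
          w xx) = 0 := by
      refine le_antisymm ?_ (zero_le)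
      have hle : (∫⁻ xx in Iab a b,
          (∫⁻ t in Iab a (xx : EReal), (∫⁻ s in Iab a (t : EReal), f s) ^ q * u t) ^ (r/q) *
            w xx) ≤ ∫⁻ _ in Iab a b, 0 := by
        refine setLIntegral_mono' (measurableSet_Iab _ _) fun xx hxx => ?_
        rw [hmid xx hxx, ENNReal.zero_rpow_of_pos (by positivity), zero_mul]
      simpa using hle
    have hlhs : lhsIter a b u w q r f = 0 := by
      unfold lhsIter
      rw [houter, ENNReal.zero_rpow_of_pos (by positivity)]
    rw [hlhs]
    exact zero_le
  · rw [ENNReal.top_mul hR]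
    exact le_top

end memctx

/-- ε-approximation lemma for infima. -/
lemma sInf_mul_le {S T : Set ℝ≥0∞} (KK : ℝ≥0∞) (hK0 : KK ≠ 0) (hKt : KK ≠ ∞)
    (hST : ∀ C ∈ S, KK * C ∈ T) : sInf T ≤ KK * sInf S := by
  rcases eq_or_ne (sInf S) ∞ with h | h
  · rw [h, ENNReal.mul_top hK0]
    exact le_top
  refine ENNReal.le_of_forall_pos_le_add fun ε hε _ => ?_
  have hδ : (ε : ℝ≥0∞) / KK ≠ 0 := by
    simp only [ne_eq, ENNReal.div_eq_zero_iff, not_or]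
    exact ⟨by exact_mod_cast hε.ne', hKt⟩
  obtain ⟨C, hCS, hClt⟩ := sInf_lt_iff.mp (ENNReal.lt_add_right h hδ)
  calc sInf T ≤ KK * C := sInf_le (hST C hCS)
    _ ≤ KK * (sInf S + ε / KK) := mul_le_mul_right hClt.le _
    _ = KK * sInf S + KK * ((ε:ℝ≥0∞) / KK) := mul_add _ _ _
    _ ≤ KK * sInf S + ε := add_le_add_right ENNReal.mul_div_le _

lemma sInf_le_mul_add {S1 S2 T : Set ℝ≥0∞} (KK : ℝ≥0∞) (hK0 : KK ≠ 0) (hKt : KK ≠ ∞)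
    (h : ∀ C1 ∈ S1, ∀ C2 ∈ S2, KK * (C1 + C2) ∈ T) :
    sInf T ≤ KK * (sInf S1 + sInf S2) := by
  rcases eq_or_ne (sInf S1) ∞ with h1 | h1
  · rw [h1, top_add, ENNReal.mul_top hK0]
    exact le_top
  rcases eq_or_ne (sInf S2) ∞ with h2 | h2
  · rw [h2, add_top, ENNReal.mul_top hK0]
    exact le_top
  refine ENNReal.le_of_forall_pos_le_add fun ε hε _ => ?_
  have hδ : (ε : ℝ≥0∞) / (2 * KK) ≠ 0 := by
    simp only [ne_eq, ENNReal.div_eq_zero_iff, not_or]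
    exact ⟨by exact_mod_cast hε.ne', ENNReal.mul_ne_top (by norm_num) hKt⟩
  obtain ⟨C1, hC1S, hC1lt⟩ := sInf_lt_iff.mp (ENNReal.lt_add_right h1 hδ)
  obtain ⟨C2, hC2S, hC2lt⟩ := sInf_lt_iff.mp (ENNReal.lt_add_right h2 hδ)
  calc sInf T ≤ KK * (C1 + C2) := sInf_le (h C1 hC1S C2 hC2S)
    _ ≤ KK * ((sInf S1 + (ε:ℝ≥0∞) / (2 * KK)) + (sInf S2 + (ε:ℝ≥0∞) / (2 * KK))) :=
        mul_le_mul_right (add_le_add hC1lt.le hC2lt.le) _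
    _ = KK * (sInf S1 + sInf S2) + (2 * KK) * ((ε:ℝ≥0∞) / (2 * KK)) := by ring
    _ ≤ KK * (sInf S1 + sInf S2) + ε := add_le_add_right ENNReal.mul_div_le _

end S15


open S15 in
theorem statement15 (p q r : ℝ) (hp : 1 ≤ p) (hq : 0 < q) (hr : 0 < r)
    (d₁ d₂ : ℝ≥0∞) (hd₁ : 0 < d₁) (hd₂ : d₂ < ∞) (hd : d₁ ≤ d₂) :
    ∃ c₁ c₂ : ℝ≥0∞, 0 < c₁ ∧ c₂ < ∞ ∧
      ∀ (a b : EReal), a < b →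
      ∀ u v w : ℝ → ℝ≥0∞, Measurable u → Measurable v → Measurable w →
        (∀ x ∈ Iab a b, 0 < u x ∧ u x < ∞) →
        (∀ x ∈ Iab a b, 0 < v x ∧ v x < ∞) →
        (∀ x ∈ Iab a b, 0 < w x ∧ w x < ∞) →
        (∀ t ∈ Iab a b, 0 < Wf w b (t : EReal) ∧ Wf w b (t : EReal) < ∞) →
      ∀ (N : ℤ) (x : ℤ → EReal),
        x N = a →
        (∀ k, N ≤ k → x k < x (k + 1)) →
        (∀ k, N ≤ k → a ≤ x k ∧ x k ≤ b) →
        (∀ k, N ≤ k → d₁ * (2 : ℝ≥0∞) ^ (-(k : ℝ)) ≤ Wf w b (x k) ∧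
          Wf w b (x k) ≤ d₂ * (2 : ℝ≥0∞) ^ (-(k : ℝ))) →
        (((∃ C : ℝ≥0∞, 0 < C ∧ C < ∞ ∧ MainIneq a b u v w p q r C) ↔
            (∃ C' C'' : ℝ≥0∞, 0 < C' ∧ C' < ∞ ∧ 0 < C'' ∧ C'' < ∞ ∧
              Disc1 u v p q r N x C' ∧ Disc2 a u v p q r N x C'')) ∧
          c₁ * (sInf {C' | Disc1 u v p q r N x C'} + sInf {C'' | Disc2 a u v p q r N x C''}) ≤
            sInf {C | MainIneq a b u v w p q r C} ∧
          sInf {C | MainIneq a b u v w p q r C} ≤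
            c₂ * (sInf {C' | Disc1 u v p q r N x C'} +
              sInf {C'' | Disc2 a u v p q r N x C''})) := by
  have hp0 : (0:ℝ) < p := lt_of_lt_of_le one_pos hp
  have hd₁0 : d₁ ≠ 0 := hd₁.ne'
  have hd₁t : d₁ ≠ ∞ := (lt_of_le_of_lt hd hd₂).ne
  have hd₂0 : d₂ ≠ 0 := (lt_of_lt_of_le hd₁ hd).ne'
  have hd₂t : d₂ ≠ ∞ := hd₂.ne
  obtain ⟨K, hK0, hKt, hKprop⟩ := dHardy (r / q) (by positivity)
  -- constants
  set K₁ : ℝ≥0∞ := (2 * d₁⁻¹) ^ (1/r) with hK₁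
  set K₂ : ℝ≥0∞ := (4 * d₁⁻¹) ^ (1/r) with hK₂
  set K₃ : ℝ≥0∞ := (4 * d₂ * ((2:ℝ≥0∞) ^ q) ^ (r/q) * K * (2:ℝ≥0∞) ^ (r/q)) ^ (1/r) with hK₃
  have hbase1 : (2 * d₁⁻¹ : ℝ≥0∞) ≠ 0 :=
    mul_ne_zero (by norm_num) (ENNReal.inv_ne_zero.mpr hd₁t)
  have hbase1t : (2 * d₁⁻¹ : ℝ≥0∞) ≠ ∞ :=
    ENNReal.mul_ne_top (by norm_num) (ENNReal.inv_ne_top.mpr hd₁0)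
  have hbase2 : (4 * d₁⁻¹ : ℝ≥0∞) ≠ 0 :=
    mul_ne_zero (by norm_num) (ENNReal.inv_ne_zero.mpr hd₁t)
  have hbase2t : (4 * d₁⁻¹ : ℝ≥0∞) ≠ ∞ :=
    ENNReal.mul_ne_top (by norm_num) (ENNReal.inv_ne_top.mpr hd₁0)
  have h2q0 : ((2:ℝ≥0∞) ^ q) ^ (r/q) ≠ 0 :=
    (ENNReal.rpow_pos (ENNReal.rpow_pos (by norm_num) (by norm_num)) (two_rpow_ne_top q)).ne'
  have h2qt : ((2:ℝ≥0∞) ^ q) ^ (r/q) ≠ ∞ :=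
    ENNReal.rpow_ne_top_of_nonneg (by positivity) (two_rpow_ne_top q)
  have hbase3 : (4 * d₂ * ((2:ℝ≥0∞) ^ q) ^ (r/q) * K * (2:ℝ≥0∞) ^ (r/q)) ≠ 0 :=
    mul_ne_zero (mul_ne_zero (mul_ne_zero (mul_ne_zero (by norm_num) hd₂0) h2q0) hK0)
      (two_rpow_ne_zero _)
  have hbase3t : (4 * d₂ * ((2:ℝ≥0∞) ^ q) ^ (r/q) * K * (2:ℝ≥0∞) ^ (r/q)) ≠ ∞ :=
    ENNReal.mul_ne_top (ENNReal.mul_ne_top (ENNReal.mul_ne_top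
      (ENNReal.mul_ne_top (by norm_num) hd₂t) h2qt) hKt) (two_rpow_ne_top _)
  have hK₁0 : K₁ ≠ 0 := by
    rw [hK₁]; exact (ENNReal.rpow_pos (pos_iff_ne_zero.mpr hbase1) hbase1t).ne'
  have hK₁t : K₁ ≠ ∞ := by
    rw [hK₁]; exact ENNReal.rpow_ne_top_of_nonneg (by positivity) hbase1t
  have hK₂0 : K₂ ≠ 0 := by
    rw [hK₂]; exact (ENNReal.rpow_pos (pos_iff_ne_zero.mpr hbase2) hbase2t).ne'
  have hK₂t : K₂ ≠ ∞ := by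
    rw [hK₂]; exact ENNReal.rpow_ne_top_of_nonneg (by positivity) hbase2t
  have hK₃0 : K₃ ≠ 0 := by
    rw [hK₃]; exact (ENNReal.rpow_pos (pos_iff_ne_zero.mpr hbase3) hbase3t).ne'
  have hK₃t : K₃ ≠ ∞ := by
    rw [hK₃]; exact ENNReal.rpow_ne_top_of_nonneg (by positivity) hbase3t
  have hK12t : K₁ + K₂ ≠ ∞ := ENNReal.add_ne_top.mpr ⟨hK₁t, hK₂t⟩
  have hK120 : K₁ + K₂ ≠ 0 := fun h => hK₁0 (by
    rcases add_eq_zero.mp h with ⟨h1, _⟩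
    exact h1)
  refine ⟨(K₁ + K₂)⁻¹, K₃, ?_, ?_, ?_⟩
  · exact pos_iff_ne_zero.mpr (ENNReal.inv_ne_zero.mpr hK12t)
  · exact lt_top_iff_ne_top.mpr hK₃t
  intro a b _ u v w hu hv hw _ hvpos _ hWpos N x hx0 hxm hab hWk
  have hW : ∀ t : ℝ, t ∈ Iab a b → 0 < Wf w b ↑t := fun t ht => (hWpos t ht).1
  have hWl : ∀ k, N ≤ k → d₁ * 2 ^ (-(k : ℝ)) ≤ Wf w b (x k) := fun k hk => (hWk k hk).1
  have hWx : ∀ k, N ≤ k → Wf w b (x k) ≤ d₂ * 2 ^ (-(k : ℝ)) := fun k hk => (hWk k hk).2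
  have hvne : ∀ s ∈ Iab a b, v s ≠ 0 := fun s hs => (hvpos s hs).1.ne'
  -- the three implications
  have hE1 : ∀ C, MainIneq a b u v w p q r C → Disc1 u v p q r N x (K₁ * C) :=
    fun C h => easy1 hq hr hp0 hw hd₁0 hd₁t hd₂t hxm hx0 hab hW hWl hWx C h
  have hE2 : ∀ C, MainIneq a b u v w p q r C → Disc2 a u v p q r N x (K₂ * C) :=
    fun C h => easy2 hq hr hp0 hu hw hd₁0 hd₁t hd₂t hxm hx0 hab hW hWl hWx C h
  have hH : ∀ C' C'', Disc1 u v p q r N x C' → Disc2 a u v p q r N x C'' →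
      MainIneq a b u v w p q r (K₃ * (C' + C'')) :=
    fun C' C'' h1 h2 => hard hq hr hp0 hu hw hd₂0 hd₂t hxm hx0 hab hW hWx K hKprop
      C' C'' h1 h2
  refine ⟨?_, ?_, ?_⟩
  · -- the iff
    constructor
    · rintro ⟨C, hC0, hCt, hC⟩
      refine ⟨K₁ * C, K₂ * C, ?_, ?_, ?_, ?_, hE1 C hC, hE2 C hC⟩
      · exact ENNReal.mul_pos hK₁0 hC0.ne'
      · exact lt_top_iff_ne_top.mpr (ENNReal.mul_ne_top hK₁t hCt.ne)
      · exact ENNReal.mul_pos hK₂0 hC0.ne'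
      · exact lt_top_iff_ne_top.mpr (ENNReal.mul_ne_top hK₂t hCt.ne)
    · rintro ⟨C', C'', hC'0, hC't, hC''0, hC''t, h1, h2⟩
      refine ⟨K₃ * (C' + C''), ?_, ?_, hH C' C'' h1 h2⟩
      · exact ENNReal.mul_pos hK₃0 (fun h => hC'0.ne' (add_eq_zero.mp h).1)
      · exact lt_top_iff_ne_top.mpr (ENNReal.mul_ne_top hK₃t
          (ENNReal.add_ne_top.mpr ⟨hC't.ne, hC''t.ne⟩))
  · -- lower bound for sInf of main
    have hi1 : sInf {C' | Disc1 u v p q r N x C'}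
        ≤ K₁ * sInf {C | MainIneq a b u v w p q r C} :=
      sInf_mul_le K₁ hK₁0 hK₁t (fun C hC => hE1 C hC)
    have hi2 : sInf {C'' | Disc2 a u v p q r N x C''}
        ≤ K₂ * sInf {C | MainIneq a b u v w p q r C} :=
      sInf_mul_le K₂ hK₂0 hK₂t (fun C hC => hE2 C hC)
    calc (K₁ + K₂)⁻¹ * (sInf {C' | Disc1 u v p q r N x C'} +
          sInf {C'' | Disc2 a u v p q r N x C''})
        ≤ (K₁ + K₂)⁻¹ * ((K₁ + K₂) * sInf {C | MainIneq a b u v w p q r C}) := by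
          refine mul_le_mul_right ?_ _
          calc sInf {C' | Disc1 u v p q r N x C'} +
                sInf {C'' | Disc2 a u v p q r N x C''}
              ≤ K₁ * sInf {C | MainIneq a b u v w p q r C} +
                K₂ * sInf {C | MainIneq a b u v w p q r C} := add_le_add hi1 hi2
            _ = (K₁ + K₂) * sInf {C | MainIneq a b u v w p q r C} := (add_mul _ _ _).symm
      _ = sInf {C | MainIneq a b u v w p q r C} := by
          rw [← mul_assoc, ENNReal.inv_mul_cancel hK120 hK12t, one_mul]
  · -- upper bound for sInf of main
    exact sInf_le_mul_add K₃ hK₃0 hK₃t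
      (fun C1 h1 C2 h2 => hH C1 C2 h1 h2)
end
end

section
/- Let 1 ≤ p < ∞, 0 < q, r < ∞, let u, v be weights on (a,b), let N ∈ ℤ, and let {x_k}_{k=N}^∞ be a strictly increasing sequence in [a,b]. For each k ≥ N+1, let B(x_{k-1},x_k) denote the best constant in the local weighted Hardy inequality, i.e. B(x_{k-1},x_k) = sup over nonnegative measurable h on (x_{k-1},x_k) of (∫_{x_{k-1}}^{x_k} (∫_{x_{k-1}}^t h(s)ds)^q u(t)dt)^{1/q} / (∫_{x_{k-1}}^{x_k} h^p v)^{1/p}. Then there exists a finite positive constant C′ such that (Σ_{k=N+1}^∞ 2^{-k} (∫_{x_{k-1}}^{x_k} (∫_{x_{k-1}}^t f)^q u(t)dt)^{r/q})^{1/r} ≤ C′ (Σ_{k=N+1}^∞ ∫_{x_{k-1}}^{x_k} f^p v)^{1/p} holds for all nonnegative measurable f on (a,b) if and only if there exists a finite positive constant C such that (Σ_{k=N+1}^∞ 2^{-k} a_k^r B(x_{k-1},x_k)^r)^{1/r} ≤ C (Σ_{k=N+1}^∞ a_k^p)^{1/p} holds for every sequence of nonnegative numbers {a_k}_{k=N+1}^∞.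 Moreover, the least such constants are two-sidedly comparable with comparison constants depending only on p, q, r. -/
open MeasureTheory ENNReal NNReal Set

noncomputable section

lemma measurableSet_Iab (a b : EReal) : MeasurableSet (Iab a b) := by
  have : OrdConnected (Iab a b) := by
    constructor
    intro x hx y hy z hz
    exact ⟨lt_of_lt_of_le hx.1 (EReal.coe_le_coe_iff.2 hz.1),
      lt_of_le_of_lt (EReal.coe_le_coe_iff.2 hz.2) hy.2⟩
  exact this.measurableSet

lemma Iab_mono {a a' b b' : EReal} (ha : a' ≤ a) (hb : b ≤ b') : Iab a b ⊆ Iab a' b' :=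
  fun _ hx => ⟨lt_of_le_of_lt ha hx.1, lt_of_lt_of_le hx.2 hb⟩

lemma iSup_rpow' {ι : Sort*} (g : ι → ℝ≥0∞) {e : ℝ} (he : 0 < e) :
    (⨆ i, g i) ^ e = ⨆ i, g i ^ e := by
  apply le_antisymm
  · have h1 : (⨆ i, g i) ≤ (⨆ i, g i ^ e) ^ (1 / e) := by
      apply iSup_le; intro i
      have h2 : g i = (g i ^ e) ^ (1 / e) := by
        rw [← ENNReal.rpow_mul, mul_one_div, div_self he.ne', ENNReal.rpow_one]
      rw [h2]; exact ENNReal.rpow_le_rpow (le_iSup (fun i => g i ^ e) i) (by positivity)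
    calc (⨆ i, g i) ^ e ≤ ((⨆ i, g i ^ e) ^ (1 / e)) ^ e := ENNReal.rpow_le_rpow h1 he.le
    _ = ⨆ i, g i ^ e := by
        rw [← ENNReal.rpow_mul, one_div_mul_cancel he.ne', ENNReal.rpow_one]
  · exact iSup_le fun i => ENNReal.rpow_le_rpow (le_iSup g i) he.le

lemma finsetSum_iSup_eq {ι κ : Type*} [Nonempty κ] [DecidableEq ι] (K : Finset ι)
    (F : ι → κ → ℝ≥0∞) :
    ∑ k ∈ K, ⨆ j, F k j = ⨆ H : ι → κ, ∑ k ∈ K, F k (H k) := by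
  induction K using Finset.cons_induction with
  | empty => simp
  | cons a K ha ih =>
    simp only [Finset.sum_cons, ih, ENNReal.iSup_add, ENNReal.add_iSup]
    apply le_antisymm
    · apply iSup_le; intro H; apply iSup_le; intro j
      apply le_iSup_of_le (Function.update H a j)
      have h1 : Function.update H a j a = j := Function.update_self a j H
      rw [h1]
      gcongr with k hk
      rw [Function.update_of_ne (by rintro rfl; exact ha hk) j H]
    · apply iSup_le; intro H
      exact le_iSup_of_le H (le_iSup_of_le (H a) le_rfl)

lemma measurable_inner (c : EReal) (f : ℝ → ℝ≥0∞) :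
    Measurable (fun t : ℝ => ∫⁻ s in Iab c (t : EReal), f s) := by
  apply Monotone.measurable
  intro t t' htt'
  exact lintegral_mono_set (Iab_mono le_rfl (EReal.coe_le_coe_iff.2 htt'))

lemma inner_zero_of_den_zero {c d : EReal} {v f : ℝ → ℝ≥0∞} {p : ℝ} (hp : 0 < p)
    (hv : ∀ s ∈ Iab c d, v s ≠ 0) (hf : Measurable f) (hvm : Measurable v)
    (hden : ∫⁻ t in Iab c d, f t ^ p * v t = 0) {T : Set ℝ} (hT : T ⊆ Iab c d) :
    ∫⁻ s in T, f s = 0 := by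
  have hm : Measurable fun t => f t ^ p * v t := (hf.pow measurable_const).mul hvm
  have h0 : (fun t => f t ^ p * v t) =ᵐ[volume.restrict (Iab c d)] 0 :=
    (lintegral_eq_zero_iff hm).mp hden
  have hf0 : ∀ᵐ s ∂(volume.restrict (Iab c d)), f s = 0 := by
    filter_upwards [h0, ae_restrict_mem (measurableSet_Iab c d)] with s hs hsm
    rcases mul_eq_zero.mp hs with h | h
    · rcases ENNReal.rpow_eq_zero_iff.mp h with ⟨h1, _⟩ | ⟨_, h2⟩
      · exact h1
      · exact absurd h2 (not_lt.mpr hp.le)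
    · exact absurd h (hv s hsm)
  have hf0' : ∀ᵐ s ∂(volume.restrict T), f s = 0 :=
    ae_restrict_of_ae_restrict_of_subset hT hf0
  calc ∫⁻ s in T, f s = ∫⁻ _ in T, 0 := lintegral_congr_ae (by filter_upwards [hf0'] with s hs using hs)
  _ = 0 := lintegral_zero

def trunc (v f : ℝ → ℝ≥0∞) (n : ℕ) (s : ℝ) : ℝ≥0∞ :=
  if v s ≤ n ∧ |s| ≤ (n : ℝ) then min (f s) n else 0

lemma trunc_meas {v f : ℝ → ℝ≥0∞} (hv : Measurable v) (hf : Measurable f) (n : ℕ) :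
    Measurable (trunc v f n) := by
  unfold trunc
  exact Measurable.ite ((measurableSet_le hv measurable_const).inter
    (measurableSet_le continuous_abs.measurable measurable_const))
    (hf.min measurable_const) measurable_const

lemma trunc_mono {v f : ℝ → ℝ≥0∞} : Monotone (trunc v f) := by
  intro n m hnm s
  unfold trunc
  by_cases h : v s ≤ (n : ℝ≥0∞) ∧ |s| ≤ (n : ℝ)
  · have h' : v s ≤ (m : ℝ≥0∞) ∧ |s| ≤ (m : ℝ) :=
      ⟨h.1.trans (by exact_mod_cast Nat.cast_le.mpr hnm),
        h.2.trans (by exact_mod_cast Nat.cast_le.mpr hnm)⟩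
    rw [if_pos h, if_pos h']
    exact le_min (min_le_left _ _) ((min_le_right _ _).trans (by exact_mod_cast Nat.cast_le.mpr hnm))
  · rw [if_neg h]; exact zero_le

lemma trunc_le {v f : ℝ → ℝ≥0∞} (n : ℕ) (s : ℝ) : trunc v f n s ≤ f s := by
  unfold trunc
  split
  · exact min_le_left _ _
  · exact zero_le

lemma trunc_iSup {v f : ℝ → ℝ≥0∞} {s : ℝ} (hvs : v s ≠ ∞) : ⨆ n, trunc v f n s = f s := by
  apply le_antisymm (iSup_le fun n => trunc_le n s)
  obtain ⟨n0, hn0⟩ := ENNReal.exists_nat_gt hvs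
  obtain ⟨n1, hn1⟩ := exists_nat_ge |s|
  by_cases hfs : f s = ∞
  · have hkey : ∀ k : ℕ, (k : ℝ≥0∞) ≤ ⨆ n, trunc v f n s := by
      intro k
      set m := max n0 (max n1 k) with hm
      have hc : v s ≤ (m : ℝ≥0∞) ∧ |s| ≤ (m : ℝ) := by
        constructor
        · exact hn0.le.trans (by exact_mod_cast Nat.cast_le.mpr (le_max_left _ _))
        · exact hn1.trans (by exact_mod_cast (le_max_left n1 k).trans (le_max_right n0 _))
      have : trunc v f m s = (m : ℝ≥0∞) := by
        rw [trunc, if_pos hc, hfs, min_eq_right le_top]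
      calc (k : ℝ≥0∞) ≤ (m : ℝ≥0∞) := by
            exact_mod_cast Nat.cast_le.mpr ((le_max_right n1 k).trans (le_max_right n0 _))
      _ = trunc v f m s := this.symm
      _ ≤ ⨆ n, trunc v f n s := le_iSup (fun n => trunc v f n s) m
    calc f s = ⊤ := hfs
    _ = ⨆ k : ℕ, (k : ℝ≥0∞) := ENNReal.iSup_natCast.symm
    _ ≤ ⨆ n, trunc v f n s := iSup_le hkey
  · obtain ⟨n2, hn2⟩ := ENNReal.exists_nat_gt hfs
    set m := max n0 (max n1 n2) with hm
    have hc : v s ≤ (m : ℝ≥0∞) ∧ |s| ≤ (m : ℝ) := by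
      constructor
      · exact hn0.le.trans (by exact_mod_cast Nat.cast_le.mpr (le_max_left _ _))
      · exact hn1.trans (by exact_mod_cast (le_max_left n1 n2).trans (le_max_right n0 _))
    have : trunc v f m s = f s := by
      rw [trunc, if_pos hc, min_eq_left]
      exact hn2.le.trans (by exact_mod_cast Nat.cast_le.mpr ((le_max_right n1 n2).trans (le_max_right n0 _)))
    exact this.ge.trans (le_iSup (fun n => trunc v f n s) m)

lemma trunc_den_ne_top {v f : ℝ → ℝ≥0∞} {p : ℝ} (hp : 0 < p) (n : ℕ) (S : Set ℝ) :
    ∫⁻ t in S, trunc v f n t ^ p * v t ≠ ∞ := by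
  have hb : ∀ t : ℝ, trunc v f n t ^ p * v t ≤
      (Icc (-(n:ℝ)) n).indicator (fun _ => (n : ℝ≥0∞) ^ p * n) t := by
    intro t
    by_cases h : v t ≤ (n : ℝ≥0∞) ∧ |t| ≤ (n : ℝ)
    · have ht : t ∈ Icc (-(n:ℝ)) n := abs_le.mp h.2
      rw [indicator_of_mem ht]
      apply mul_le_mul'
      · rw [trunc, if_pos h]
        exact ENNReal.rpow_le_rpow (min_le_right _ _) hp.le
      · exact h.1
    · rw [trunc, if_neg h, ENNReal.zero_rpow_of_pos hp, zero_mul]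
      exact zero_le
  have : ∫⁻ t in S, trunc v f n t ^ p * v t ≤ (n : ℝ≥0∞) ^ p * n * volume (Icc (-(n:ℝ)) n) := by
    calc ∫⁻ t in S, trunc v f n t ^ p * v t
        ≤ ∫⁻ t, (Icc (-(n:ℝ)) n).indicator (fun _ => (n : ℝ≥0∞) ^ p * n) t :=
          (setLIntegral_le_lintegral _ _).trans' (lintegral_mono hb)
    _ = (n : ℝ≥0∞) ^ p * n * volume (Icc (-(n:ℝ)) n) := by
        rw [lintegral_indicator measurableSet_Icc, setLIntegral_const]
  exact ne_top_of_le_ne_top (by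
    apply ENNReal.mul_ne_top
    · exact ENNReal.mul_ne_top (ENNReal.rpow_ne_top_of_nonneg hp.le (by simp)) (by simp)
    · rw [Real.volume_Icc]; exact ENNReal.ofReal_ne_top) this

lemma local_est {p q : ℝ} (hp : 1 ≤ p) (hq : 0 < q) {u v : ℝ → ℝ≥0∞}
    (hu : Measurable u) (hvm : Measurable v) {c d : EReal}
    (hv : ∀ s ∈ Iab c d, 0 < v s ∧ v s < ∞) {f : ℝ → ℝ≥0∞} (hf : Measurable f) :
    (∫⁻ t in Iab c d, (∫⁻ s in Iab c (t : EReal), f s) ^ q * u t) ^ (1 / q)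
      ≤ Bconst u v p q c d * (∫⁻ t in Iab c d, f t ^ p * v t) ^ (1 / p) := by
  have hp0 : (0:ℝ) < p := lt_of_lt_of_le one_pos hp
  have step1 : ∀ g : ℝ → ℝ≥0∞, Measurable g →
      (∫⁻ t in Iab c d, g t ^ p * v t) ≠ ∞ →
      (∫⁻ t in Iab c d, (∫⁻ s in Iab c (t : EReal), g s) ^ q * u t) ^ (1 / q)
        ≤ Bconst u v p q c d * (∫⁻ t in Iab c d, g t ^ p * v t) ^ (1 / p) := by
    intro g hg hgfin
    by_cases hD0 : (∫⁻ t in Iab c d, g t ^ p * v t) = 0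
    · have hnum : (∫⁻ t in Iab c d, (∫⁻ s in Iab c (t : EReal), g s) ^ q * u t) = 0 := by
        have : ∀ t, t ∈ Iab c d →
            (∫⁻ s in Iab c (t : EReal), g s) ^ q * u t = (0 : ℝ≥0∞) := by
          intro t ht
          have h0 : ∫⁻ s in Iab c (t : EReal), g s = 0 :=
            inner_zero_of_den_zero hp0 (fun s hs => (hv s hs).1.ne') hg hvm hD0
              (Iab_mono le_rfl ht.2.le)
          rw [h0, ENNReal.zero_rpow_of_pos hq, zero_mul]
        rw [setLIntegral_congr_fun (measurableSet_Iab c d) this]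
        simp
      rw [hnum, ENNReal.zero_rpow_of_pos (by positivity)]
      exact zero_le
    · have hB : (∫⁻ t in Iab c d, (∫⁻ s in Iab c (t : EReal), g s) ^ q * u t) ^ (1 / q) /
          (∫⁻ t in Iab c d, g t ^ p * v t) ^ (1 / p) ≤ Bconst u v p q c d := by
        apply le_iSup_of_le g
        exact le_iSup_of_le hg le_rfl
      have hDp0 : (∫⁻ t in Iab c d, g t ^ p * v t) ^ (1 / p) ≠ 0 := by
        intro hcon
        rcases ENNReal.rpow_eq_zero_iff.mp hcon with ⟨h1, _⟩ | ⟨h1, _⟩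
        · exact hD0 h1
        · exact hgfin h1
      have hDpt : (∫⁻ t in Iab c d, g t ^ p * v t) ^ (1 / p) ≠ ∞ :=
        ENNReal.rpow_ne_top_of_nonneg (by positivity) hgfin
      exact (ENNReal.div_le_iff hDp0 hDpt).mp hB
  -- monotone approximation
  have hgm : ∀ n, Measurable (trunc v f n) := fun n => trunc_meas hvm hf n
  have hnum : (∫⁻ t in Iab c d, (∫⁻ s in Iab c (t : EReal), f s) ^ q * u t)
      = ⨆ n, ∫⁻ t in Iab c d, (∫⁻ s in Iab c (t : EReal), trunc v f n s) ^ q * u t := by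
    have hpt : ∀ t, t ∈ Iab c d →
        (∫⁻ s in Iab c (t : EReal), f s) ^ q * u t
          = ⨆ n, (∫⁻ s in Iab c (t : EReal), trunc v f n s) ^ q * u t := by
      intro t ht
      have hinner : (∫⁻ s in Iab c (t : EReal), f s)
          = ⨆ n, ∫⁻ s in Iab c (t : EReal), trunc v f n s := by
        rw [← lintegral_iSup hgm (fun n m hnm s => trunc_mono hnm s)]
        apply setLIntegral_congr_fun (measurableSet_Iab c _)
        intro s hs
        exact (trunc_iSup (hv s (Iab_mono le_rfl ht.2.le hs)).2.ne).symm
      rw [hinner, iSup_rpow' _ hq, ENNReal.iSup_mul]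
    rw [setLIntegral_congr_fun (measurableSet_Iab c d) hpt]
    apply lintegral_iSup
    · intro n
      exact ((measurable_inner c (trunc v f n)).pow measurable_const).mul hu
    · intro n m hnm t
      exact mul_le_mul_left
        (ENNReal.rpow_le_rpow (lintegral_mono fun s => trunc_mono hnm s) hq.le) _
  rw [hnum, iSup_rpow' _ (by positivity : (0:ℝ) < 1/q)]
  apply iSup_le
  intro n
  refine (step1 (trunc v f n) (hgm n) (trunc_den_ne_top hp0 n _)).trans ?_
  apply mul_le_mul_right
  apply ENNReal.rpow_le_rpow ?_ (by positivity : (0:ℝ) ≤ 1/p)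
  apply lintegral_mono
  intro t
  exact mul_le_mul_left (ENNReal.rpow_le_rpow (trunc_le n t) hp0.le) _

lemma two_rpow_ne_zero {y : ℝ} : (2 : ℝ≥0∞) ^ y ≠ 0 := by
  intro h
  rcases ENNReal.rpow_eq_zero_iff.mp h with ⟨h1, _⟩ | ⟨h1, _⟩
  · exact two_ne_zero h1
  · exact absurd h1 (by simp)

lemma rpow_cancel {X : ℝ≥0∞} {e : ℝ} (he : e ≠ 0) : (X ^ e) ^ (1/e) = X := by
  rw [← ENNReal.rpow_mul, mul_one_div, div_self he, ENNReal.rpow_one]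

lemma rpow_cancel' {X : ℝ≥0∞} {e : ℝ} (he : e ≠ 0) : (X ^ (1/e)) ^ e = X := by
  rw [← ENNReal.rpow_mul, one_div_mul_cancel he, ENNReal.rpow_one]

lemma seqB_to_disc1 {p q r : ℝ} (hp : 1 ≤ p) (hq : 0 < q) (hr : 0 < r)
    {a b : EReal} {u v : ℝ → ℝ≥0∞} (hu : Measurable u) (hvm : Measurable v)
    (hv : ∀ x ∈ Iab a b, 0 < v x ∧ v x < ∞)
    {N : ℤ} {x : ℤ → EReal} (hxab : ∀ k, N ≤ k → a ≤ x k ∧ x k ≤ b)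
    {C : ℝ≥0∞} (hC : SeqB u v p q r N x C) : Disc1 u v p q r N x C := by
  intro f hf
  have hp0 : (0:ℝ) < p := lt_of_lt_of_le one_pos hp
  set den : {k : ℤ // N < k} → ℝ≥0∞ :=
    fun k => ∫⁻ s in Iab (x (k.1 - 1)) (x k.1), f s ^ p * v s with hdendef
  set num : {k : ℤ // N < k} → ℝ≥0∞ :=
    fun k => ∫⁻ t in Iab (x (k.1 - 1)) (x k.1),
      (∫⁻ s in Iab (x (k.1 - 1)) (t : EReal), f s) ^ q * u t with hnumdef
  have hIsub : ∀ k : {k : ℤ // N < k}, Iab (x (k.1-1)) (x k.1) ⊆ Iab a b := fun k =>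
    Iab_mono (hxab (k.1-1) (by omega)).1 (hxab k.1 (by omega)).2
  have hloc : ∀ k : {k : ℤ // N < k},
      num k ^ (1/q) ≤ Bconst u v p q (x (k.1-1)) (x k.1) * den k ^ (1/p) := fun k =>
    local_est hp hq hu hvm (fun s hs => hv s (hIsub k hs)) hf
  by_cases hfin : ∀ k, den k ≠ ∞
  · set aa : ℤ → ℝ≥0 := fun m =>
      if h : N < m then ((den ⟨m, h⟩) ^ (1/p)).toNNReal else 0 with haadef
    have haa : ∀ k : {k : ℤ // N < k}, (aa k.1 : ℝ≥0∞) = den k ^ (1/p) := by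
      intro k
      simp only [haadef, dif_pos k.2]
      rw [ENNReal.coe_toNNReal (ENNReal.rpow_ne_top_of_nonneg (by positivity) (hfin _))]
    have key := hC aa
    have h2 : ∀ k : {k:ℤ//N<k}, (aa k.1:ℝ≥0∞) ^ p = den k := by
      intro k; rw [haa k, rpow_cancel' hp0.ne']
    have hterm : ∀ k : {k:ℤ//N<k},
        (2 : ℝ≥0∞) ^ (-(k.1 : ℝ)) * num k ^ (r/q)
          ≤ (2 : ℝ≥0∞) ^ (-(k.1 : ℝ)) * (aa k.1 : ℝ≥0∞) ^ r *
            Bconst u v p q (x (k.1-1)) (x k.1) ^ r := by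
      intro k
      have h3 : num k ^ (r/q) ≤ (aa k.1 : ℝ≥0∞) ^ r * Bconst u v p q (x (k.1-1)) (x k.1) ^ r := by
        have h4 : num k ^ (r/q) = (num k ^ (1/q)) ^ r := by
          rw [← ENNReal.rpow_mul, one_div_mul_eq_div]
        rw [h4]
        calc (num k ^ (1/q)) ^ r
            ≤ (Bconst u v p q (x (k.1-1)) (x k.1) * den k ^ (1/p)) ^ r :=
              ENNReal.rpow_le_rpow (hloc k) hr.le
        _ = (aa k.1 : ℝ≥0∞) ^ r * Bconst u v p q (x (k.1-1)) (x k.1) ^ r := by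
              rw [ENNReal.mul_rpow_of_nonneg _ _ hr.le, ← haa k, mul_comm]
      calc (2 : ℝ≥0∞) ^ (-(k.1 : ℝ)) * num k ^ (r/q)
          ≤ (2 : ℝ≥0∞) ^ (-(k.1 : ℝ)) *
            ((aa k.1 : ℝ≥0∞) ^ r * Bconst u v p q (x (k.1-1)) (x k.1) ^ r) :=
            mul_le_mul_right h3 _
      _ = _ := by rw [mul_assoc]
    calc (∑' k : {k : ℤ // N < k}, (2 : ℝ≥0∞) ^ (-(k.1 : ℝ)) * num k ^ (r/q)) ^ (1/r)
        ≤ (∑' k : {k : ℤ // N < k}, (2 : ℝ≥0∞) ^ (-(k.1 : ℝ)) * (aa k.1 : ℝ≥0∞) ^ r *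
            Bconst u v p q (x (k.1-1)) (x k.1) ^ r) ^ (1/r) :=
          ENNReal.rpow_le_rpow (ENNReal.tsum_le_tsum hterm) (by positivity)
    _ ≤ C * (∑' k : {k : ℤ // N < k}, (aa k.1 : ℝ≥0∞) ^ p) ^ (1/p) := key
    _ = C * DiscRHS v p N x f := by
        rw [DiscRHS]
        congr 2
        exact tsum_congr h2
  · push_neg at hfin
    obtain ⟨j, hj⟩ := hfin
    have hRHS : DiscRHS v p N x f = ∞ := by
      rw [DiscRHS]
      have : (∑' k : {k : ℤ // N < k}, den k) = ∞ :=
        eq_top_iff.mpr (hj ▸ ENNReal.le_tsum j)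
      rw [this, ENNReal.top_rpow_of_pos (by positivity)]
    rcases eq_or_ne C 0 with hC0 | hC0
    · -- C = 0 : all B are zero, numerators vanish
      have hB0 : ∀ k : {k:ℤ//N<k}, Bconst u v p q (x (k.1-1)) (x k.1) = 0 := by
        intro k
        set aa : ℤ → ℝ≥0 := fun m => if m = k.1 then 1 else 0 with haadef
        have key := hC aa
        have hsum : (∑' j : {k:ℤ//N<k}, (aa j.1 : ℝ≥0∞) ^ p) = 1 := by
          rw [tsum_eq_single k]
          · simp [haadef]
          · intro j hjk
            have : aa j.1 = 0 := by
              simp only [haadef, if_neg (fun h => hjk (Subtype.ext h))]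
            rw [this, ENNReal.coe_zero, ENNReal.zero_rpow_of_pos hp0]
        rw [hsum, hC0, zero_mul] at key
        have hzero : (∑' j : {k:ℤ//N<k}, (2 : ℝ≥0∞) ^ (-(j.1 : ℝ)) *
            (aa j.1 : ℝ≥0∞) ^ r * Bconst u v p q (x (j.1-1)) (x j.1) ^ r) = 0 := by
          have h1 := le_antisymm key (zero_le)
          rcases ENNReal.rpow_eq_zero_iff.mp h1 with ⟨h2, _⟩ | ⟨_, h2⟩
          · exact h2
          · exact absurd h2 (by positivity : (0:ℝ) < 1/r).not_gt
        have hk0 := (ENNReal.tsum_eq_zero.mp hzero) k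
        have haak : (aa k.1 : ℝ≥0∞) = 1 := by simp [haadef]
        rw [haak, ENNReal.one_rpow, mul_one] at hk0
        rcases mul_eq_zero.mp hk0 with h | h
        · exact absurd h two_rpow_ne_zero
        · rcases ENNReal.rpow_eq_zero_iff.mp h with ⟨h2, _⟩ | ⟨_, h2⟩
          · exact h2
          · exact absurd h2 hr.not_gt
      have hnum0 : ∀ k : {k:ℤ//N<k}, num k = 0 := by
        intro k
        have := hloc k
        rw [hB0 k, zero_mul, le_zero_iff] at this
        rcases ENNReal.rpow_eq_zero_iff.mp this with ⟨h2, _⟩ | ⟨_, h2⟩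
        · exact h2
        · exact absurd h2 (by positivity : (0:ℝ) < 1/q).not_gt
      have : (∑' k : {k : ℤ // N < k}, (2 : ℝ≥0∞) ^ (-(k.1 : ℝ)) * num k ^ (r/q)) = 0 := by
        apply ENNReal.tsum_eq_zero.mpr
        intro k
        rw [hnum0 k, ENNReal.zero_rpow_of_pos (by positivity), mul_zero]
      rw [this, ENNReal.zero_rpow_of_pos (by positivity)]
      exact zero_le
    · rw [hRHS, ENNReal.mul_top hC0]
      exact le_top

lemma x_mono {N : ℤ} {x : ℤ → EReal} (hx : ∀ k, N ≤ k → x k < x (k+1)) :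
    ∀ m n, N ≤ m → m ≤ n → x m ≤ x n := by
  intro m n hm hmn
  obtain ⟨d, rfl⟩ : ∃ d : ℕ, n = m + d := ⟨(n - m).toNat, by omega⟩
  clear hmn
  induction d with
  | zero => simp
  | succ d ih =>
    have h1 : x (m + d) < x (m + d + 1) := hx (m + d) (by omega)
    have h2 : (m + ((d:ℕ)+1 : ℕ) : ℤ) = m + (d:ℕ) + 1 := by push_cast; ring
    rw [h2]
    exact ih.trans h1.le

lemma Iab_disj {N : ℤ} {x : ℤ → EReal} (hx : ∀ k, N ≤ k → x k < x (k+1))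
    {j k : ℤ} (hj : N < j) (hk : N < k) (hjk : j ≠ k) {s : ℝ}
    (hs : s ∈ Iab (x (j-1)) (x j)) : s ∉ Iab (x (k-1)) (x k) := by
  intro hs'
  rcases lt_or_gt_of_ne hjk with h | h
  · have hle : x j ≤ x (k-1) := x_mono hx j (k-1) (by omega) (by omega)
    exact lt_irrefl (s : EReal) (((hs.2.trans_le hle).trans hs'.1))
  · have hle : x k ≤ x (j-1) := x_mono hx k (j-1) (by omega) (by omega)
    exact lt_irrefl (s : EReal) (((hs'.2.trans_le hle).trans hs.1))

lemma disc1_to_seqB {p q r : ℝ} (hp : 1 ≤ p) (hq : 0 < q) (hr : 0 < r)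
    {a b : EReal} {u v : ℝ → ℝ≥0∞} (hu : Measurable u) (hvm : Measurable v)
    (hv : ∀ x ∈ Iab a b, 0 < v x ∧ v x < ∞)
    {N : ℤ} {x : ℤ → EReal} (hx : ∀ k, N ≤ k → x k < x (k+1))
    (hxab : ∀ k, N ≤ k → a ≤ x k ∧ x k ≤ b)
    {C : ℝ≥0∞} (hC : Disc1 u v p q r N x C) : SeqB u v p q r N x C := by
  classical
  intro aa
  have hp0 : (0:ℝ) < p := lt_of_lt_of_le one_pos hp
  set Y := C * (∑' k : {k : ℤ // N < k}, (aa k.1 : ℝ≥0∞) ^ p) ^ (1/p) with hY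
  set κ := {h : ℝ → ℝ≥0∞ // Measurable h} with hκ
  haveI : Nonempty κ := ⟨⟨fun _ => 0, measurable_const⟩⟩
  set numk : {k : ℤ // N < k} → (ℝ → ℝ≥0∞) → ℝ≥0∞ := fun k h =>
    ∫⁻ t in Iab (x (k.1-1)) (x k.1), (∫⁻ s in Iab (x (k.1-1)) (t:EReal), h s) ^ q * u t
    with hnumk
  set denk : {k : ℤ // N < k} → (ℝ → ℝ≥0∞) → ℝ≥0∞ := fun k h =>
    ∫⁻ t in Iab (x (k.1-1)) (x k.1), h t ^ p * v t with hdenk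
  set G : {k : ℤ // N < k} → κ → ℝ≥0∞ := fun k h =>
    (2:ℝ≥0∞)^(-(k.1:ℝ)) * (aa k.1 : ℝ≥0∞)^r *
      (numk k h.1 ^ (1/q) / denk k h.1 ^ (1/p)) ^ r with hG
  have hIsub : ∀ k : {k : ℤ // N < k}, Iab (x (k.1-1)) (x k.1) ⊆ Iab a b := fun k =>
    Iab_mono (hxab (k.1-1) (by omega)).1 (hxab k.1 (by omega)).2
  have hBsup : ∀ k : {k : ℤ // N < k},
      (2:ℝ≥0∞)^(-(k.1:ℝ)) * (aa k.1 : ℝ≥0∞)^r * Bconst u v p q (x (k.1-1)) (x k.1) ^ r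
        = ⨆ h : κ, G k h := by
    intro k
    have h1 : Bconst u v p q (x (k.1-1)) (x k.1)
        = ⨆ h : κ, numk k h.1 ^ (1/q) / denk k h.1 ^ (1/p) := by
      rw [Bconst]
      apply le_antisymm
      · apply iSup_le; intro h; apply iSup_le; intro hh
        exact le_iSup (fun h' : κ => numk k h'.1 ^ (1/q) / denk k h'.1 ^ (1/p)) ⟨h, hh⟩
      · apply iSup_le; intro h
        exact le_iSup_of_le h.1 (le_iSup_of_le h.2 le_rfl)
    rw [h1, iSup_rpow' _ hr, ENNReal.mul_iSup]
  have main : ∀ K : Finset {k : ℤ // N < k}, ∀ H : {k : ℤ // N < k} → κ,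
      (∑ k ∈ K, G k (H k)) ≤ Y ^ r := by
    intro K H
    set c : {k : ℤ // N < k} → ℝ≥0∞ := fun k =>
      if 0 < denk k (H k).1 ∧ denk k (H k).1 ≠ ∞
      then (aa k.1 : ℝ≥0∞) / denk k (H k).1 ^ (1/p) else 0 with hc
    set f : ℝ → ℝ≥0∞ := fun s =>
      ∑ k ∈ K, c k * (Iab (x (k.1-1)) (x k.1)).indicator (H k).1 s with hfdef
    have hfm : Measurable f := by
      apply Finset.measurable_sum
      intro k _
      exact (((H k).2.indicator (measurableSet_Iab _ _)).const_mul _)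
    have hfI : ∀ k ∈ K, ∀ s ∈ Iab (x (k.1-1)) (x k.1), f s = c k * (H k).1 s := by
      intro k hk s hs
      have hfs : f s = ∑ j ∈ K, c j * (Iab (x (j.1-1)) (x j.1)).indicator ((H j).1) s := rfl
      rw [hfs, Finset.sum_eq_single_of_mem k hk]
      · rw [indicator_of_mem hs]
      · intro j _ hjk
        rw [indicator_of_notMem
          (Iab_disj hx k.2 j.2 (fun e => hjk (Subtype.ext e.symm)) hs), mul_zero]
    have hfO : ∀ k : {k : ℤ // N < k}, k ∉ K →
        ∀ s ∈ Iab (x (k.1-1)) (x k.1), f s = 0 := by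
      intro k hk s hs
      have hfs : f s = ∑ j ∈ K, c j * (Iab (x (j.1-1)) (x j.1)).indicator ((H j).1) s := rfl
      rw [hfs]
      apply Finset.sum_eq_zero
      intro j hj
      rw [indicator_of_notMem
        (Iab_disj hx k.2 j.2 (fun e => by cases Subtype.ext e; exact hk hj) hs), mul_zero]
    have hdenf : ∀ k : {k : ℤ // N < k}, denk k f ≤ (aa k.1 : ℝ≥0∞) ^ p := by
      intro k
      by_cases hk : k ∈ K
      · have heq : denk k f = c k ^ p * denk k (H k).1 := by
          show (∫⁻ t in Iab (x (k.1-1)) (x k.1), f t ^ p * v t) = _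
          rw [setLIntegral_congr_fun (measurableSet_Iab _ _)
            ((fun t ht => by
              rw [hfI k hk t ht, ENNReal.mul_rpow_of_nonneg _ _ hp0.le, mul_assoc]))]
          exact lintegral_const_mul _ (((H k).2.pow measurable_const).mul hvm)
        have hck : c k = if 0 < denk k (H k).1 ∧ denk k (H k).1 ≠ ∞
            then (aa k.1 : ℝ≥0∞) / denk k (H k).1 ^ (1/p) else 0 := rfl
        rw [heq, hck]
        split_ifs with hcond
        · rw [ENNReal.div_rpow_of_nonneg _ _ hp0.le, rpow_cancel' hp0.ne',
            ENNReal.div_mul_cancel hcond.1.ne' hcond.2]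
        · rw [ENNReal.zero_rpow_of_pos hp0, zero_mul]; exact zero_le
      · have heq : denk k f = 0 := by
          show (∫⁻ t in Iab (x (k.1-1)) (x k.1), f t ^ p * v t) = 0
          rw [setLIntegral_congr_fun (measurableSet_Iab _ _) ((fun t ht => by
            rw [hfO k hk t ht, ENNReal.zero_rpow_of_pos hp0, zero_mul]))]
          simp
        rw [heq]; exact zero_le
    have hnumf : ∀ k ∈ K, numk k f = c k ^ q * numk k (H k).1 := by
      intro k hk
      have hpt : ∀ t ∈ Iab (x (k.1-1)) (x k.1),
          (∫⁻ s in Iab (x (k.1-1)) (t:EReal), f s) ^ q * u t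
            = c k ^ q * ((∫⁻ s in Iab (x (k.1-1)) (t:EReal), (H k).1 s) ^ q * u t) := by
        intro t ht
        have hsub : Iab (x (k.1-1)) ((t:ℝ):EReal) ⊆ Iab (x (k.1-1)) (x k.1) :=
          Iab_mono le_rfl ht.2.le
        have hinner : ∫⁻ s in Iab (x (k.1-1)) (t:EReal), f s
            = c k * ∫⁻ s in Iab (x (k.1-1)) (t:EReal), (H k).1 s := by
          rw [setLIntegral_congr_fun (measurableSet_Iab _ _)
            ((fun s hs => hfI k hk s (hsub hs)))]
          exact lintegral_const_mul _ (H k).2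
        rw [hinner, ENNReal.mul_rpow_of_nonneg _ _ hq.le, mul_assoc]
      show (∫⁻ t in Iab (x (k.1-1)) (x k.1),
        (∫⁻ s in Iab (x (k.1-1)) (t:EReal), f s) ^ q * u t) = _
      rw [setLIntegral_congr_fun (measurableSet_Iab _ _) hpt]
      exact lintegral_const_mul _ (((measurable_inner _ _).pow measurable_const).mul hu)
    have hterm : ∀ k ∈ K, G k (H k) ≤ (2:ℝ≥0∞)^(-(k.1:ℝ)) * numk k f ^ (r/q) := by
      intro k hk
      by_cases hcond : 0 < denk k (H k).1 ∧ denk k (H k).1 ≠ ∞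
      · have hck : c k = (aa k.1 : ℝ≥0∞) / denk k (H k).1 ^ (1/p) := if_pos hcond
        have hqr : q * (r/q) = r := by field_simp
        have h1 : numk k f ^ (r/q) = (c k * numk k (H k).1 ^ (1/q)) ^ r := by
          rw [hnumf k hk, ENNReal.mul_rpow_of_nonneg _ _ (by positivity : (0:ℝ) ≤ r/q),
            ENNReal.mul_rpow_of_nonneg _ _ hr.le, ← ENNReal.rpow_mul, hqr,
            ← ENNReal.rpow_mul, one_div_mul_eq_div]
        have h2 : (aa k.1 : ℝ≥0∞) * (numk k (H k).1 ^ (1/q) / denk k (H k).1 ^ (1/p))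
            = c k * numk k (H k).1 ^ (1/q) := by
          rw [hck]; simp only [div_eq_mul_inv]; ring
        show (2:ℝ≥0∞)^(-(k.1:ℝ)) * (aa k.1 : ℝ≥0∞)^r *
          (numk k (H k).1 ^ (1/q) / denk k (H k).1 ^ (1/p)) ^ r ≤ _
        rw [mul_assoc, ← ENNReal.mul_rpow_of_nonneg _ _ hr.le, h2, ← h1]
      · have hratio : numk k (H k).1 ^ (1/q) / denk k (H k).1 ^ (1/p) = 0 := by
          by_cases hDt : denk k (H k).1 = ∞
          · rw [hDt, ENNReal.top_rpow_of_pos (by positivity), ENNReal.div_top]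
          · have hD0 : denk k (H k).1 = 0 := by
              by_contra h
              exact hcond ⟨pos_iff_ne_zero.mpr h, hDt⟩
            have hnum0 : numk k (H k).1 = 0 := by
              have hpt : ∀ t ∈ Iab (x (k.1-1)) (x k.1),
                  (∫⁻ s in Iab (x (k.1-1)) (t:EReal), (H k).1 s) ^ q * u t = (0:ℝ≥0∞) := by
                intro t ht
                rw [inner_zero_of_den_zero hp0 (fun s hs => (hv s (hIsub k hs)).1.ne')
                  (H k).2 hvm hD0 (Iab_mono le_rfl ht.2.le),
                  ENNReal.zero_rpow_of_pos hq, zero_mul]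
              show (∫⁻ t in Iab (x (k.1-1)) (x k.1),
                (∫⁻ s in Iab (x (k.1-1)) (t:EReal), (H k).1 s) ^ q * u t) = 0
              rw [setLIntegral_congr_fun (measurableSet_Iab _ _) hpt]
              simp
            rw [hnum0, ENNReal.zero_rpow_of_pos (by positivity), ENNReal.zero_div]
        show (2:ℝ≥0∞)^(-(k.1:ℝ)) * (aa k.1 : ℝ≥0∞)^r *
          (numk k (H k).1 ^ (1/q) / denk k (H k).1 ^ (1/p)) ^ r ≤ _
        rw [hratio, ENNReal.zero_rpow_of_pos hr, mul_zero]
        exact zero_le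
    have hsum1 : (∑ k ∈ K, G k (H k))
        ≤ ∑' k : {k:ℤ//N<k}, (2:ℝ≥0∞)^(-(k.1:ℝ)) * numk k f ^ (r/q) :=
      le_trans (Finset.sum_le_sum hterm) (ENNReal.sum_le_tsum K)
    have hD := hC f hfm
    have hDr : (∑' k : {k:ℤ//N<k}, (2:ℝ≥0∞)^(-(k.1:ℝ)) * numk k f ^ (r/q))
        ≤ (C * DiscRHS v p N x f) ^ r := by
      have h3 := ENNReal.rpow_le_rpow hD hr.le
      rwa [rpow_cancel' hr.ne'] at h3
    have hRHSle : DiscRHS v p N x f ≤ (∑' k : {k:ℤ//N<k}, (aa k.1:ℝ≥0∞)^p) ^ (1/p) := by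
      rw [DiscRHS]
      apply ENNReal.rpow_le_rpow _ (by positivity : (0:ℝ) ≤ 1/p)
      exact ENNReal.tsum_le_tsum hdenf
    calc (∑ k ∈ K, G k (H k)) ≤ (C * DiscRHS v p N x f) ^ r := hsum1.trans hDr
    _ ≤ Y ^ r := ENNReal.rpow_le_rpow (mul_le_mul_right hRHSle C) hr.le
  have hfinal : (∑' k : {k:ℤ//N<k}, (2:ℝ≥0∞)^(-(k.1:ℝ)) * (aa k.1:ℝ≥0∞)^r *
      Bconst u v p q (x (k.1-1)) (x k.1) ^ r) ≤ Y ^ r := by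
    rw [ENNReal.tsum_eq_iSup_sum]
    apply iSup_le
    intro K
    calc (∑ k ∈ K, (2:ℝ≥0∞)^(-(k.1:ℝ)) * (aa k.1:ℝ≥0∞)^r *
          Bconst u v p q (x (k.1-1)) (x k.1) ^ r)
        = ∑ k ∈ K, ⨆ h : κ, G k h := Finset.sum_congr rfl (fun k _ => hBsup k)
    _ = ⨆ H : {k:ℤ//N<k} → κ, ∑ k ∈ K, G k (H k) := finsetSum_iSup_eq K G
    _ ≤ Y ^ r := iSup_le (main K)
  calc (∑' k : {k:ℤ//N<k}, (2:ℝ≥0∞)^(-(k.1:ℝ)) * (aa k.1:ℝ≥0∞)^r *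
        Bconst u v p q (x (k.1-1)) (x k.1) ^ r) ^ (1/r)
      ≤ (Y ^ r) ^ (1/r) := ENNReal.rpow_le_rpow hfinal (by positivity)
  _ = Y := rpow_cancel hr.ne'

theorem statement16 (p q r : ℝ) (hp : 1 ≤ p) (hq : 0 < q) (hr : 0 < r) :
    ∃ c₁ c₂ : ℝ≥0∞, 0 < c₁ ∧ c₂ < ∞ ∧
      ∀ (a b : EReal), a < b →
      ∀ u v : ℝ → ℝ≥0∞, Measurable u → Measurable v →
        (∀ x ∈ Iab a b, 0 < u x ∧ u x < ∞) →
        (∀ x ∈ Iab a b, 0 < v x ∧ v x < ∞) →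
      ∀ (N : ℤ) (x : ℤ → EReal),
        (∀ k, N ≤ k → x k < x (k + 1)) →
        (∀ k, N ≤ k → a ≤ x k ∧ x k ≤ b) →
        (((∃ C' : ℝ≥0∞, 0 < C' ∧ C' < ∞ ∧ Disc1 u v p q r N x C') ↔
            (∃ C : ℝ≥0∞, 0 < C ∧ C < ∞ ∧ SeqB u v p q r N x C)) ∧
          c₁ * sInf {C | SeqB u v p q r N x C} ≤ sInf {C' | Disc1 u v p q r N x C'} ∧
          sInf {C' | Disc1 u v p q r N x C'} ≤ c₂ * sInf {C | SeqB u v p q r N x C}) := by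
  refine ⟨1, 1, zero_lt_one, one_lt_top, ?_⟩
  intro a b hab u v hu hvm hupos hvpos N x hx hxab
  have hset : {C' | Disc1 u v p q r N x C'} = {C | SeqB u v p q r N x C} := by
    ext C
    exact ⟨fun h => disc1_to_seqB hp hq hr hu hvm hvpos hx hxab h,
      fun h => seqB_to_disc1 hp hq hr hu hvm hvpos hxab h⟩
  refine ⟨?_, ?_, ?_⟩
  · constructor
    · rintro ⟨C, h1, h2, h3⟩
      exact ⟨C, h1, h2, disc1_to_seqB hp hq hr hu hvm hvpos hx hxab h3⟩
    · rintro ⟨C, h1, h2, h3⟩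
      exact ⟨C, h1, h2, seqB_to_disc1 hp hq hr hu hvm hvpos hxab h3⟩
  · rw [hset, one_mul]
  · rw [hset, one_mul]
end
end
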